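/- arXiv:2005.05042 — 2 statements merged into one kernel-verified Lean document; each statement's English description precedes it below -/
import Mathlib

section
/- Let G be a finite simple graph containing no theta, pyramid, prism, or turtle as an induced subgraph, let H be a hole in G, let v be a major vertex for H, and let u be a clone of y in H with uv ∈ E(G). If yv ∉ E(G), then u and v have a common neighbor in H. -/
namespace Paper

open SimpleGraph

variable {V : Type*}

/-- The set of neighbors of `v` inside the set `H`. -/
def nbrsIn (G : SimpleGraph V) (v : V) (H : Set V) : Set V :=
  {u | u ∈ H ∧ G.Adj v u}

/-- The vertex set of a walk. -/
def supp {G : SimpleGraph V} {a b : V} (P : G.Walk a b) : Set V :=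
  {v | v ∈ P.support}

/-- `H` is a hole of `G`: an induced cycle of length at least 4.  (A finite
graph is a cycle iff it is connected and `2`-regular.) -/
def IsHole (G : SimpleGraph V) (H : Set V) : Prop :=
  H.Finite ∧ 4 ≤ H.ncard ∧ (G.induce H).Connected ∧
    ∀ v ∈ H, (nbrsIn G v H).ncard = 2

/-- `G` contains a theta as an induced subgraph. -/
def HasTheta (G : SimpleGraph V) : Prop :=
  ∃ (a b : V) (P₁ P₂ P₃ : G.Walk a b),
    a ≠ b ∧ ¬ G.Adj a b ∧
    P₁.IsPath ∧ P₂.IsPath ∧ P₃.IsPath ∧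
    2 ≤ P₁.length ∧ 2 ≤ P₂.length ∧ 2 ≤ P₃.length ∧
    (∀ v, v ∈ P₁.support → v ∈ P₂.support → v = a ∨ v = b) ∧
    (∀ v, v ∈ P₁.support → v ∈ P₃.support → v = a ∨ v = b) ∧
    (∀ v, v ∈ P₂.support → v ∈ P₃.support → v = a ∨ v = b) ∧
    IsHole G (supp P₁ ∪ supp P₂) ∧
    IsHole G (supp P₁ ∪ supp P₃) ∧
    IsHole G (supp P₂ ∪ supp P₃)

/-- `G` contains a pyramid as an induced subgraph. -/
def HasPyramid (G : SimpleGraph V) : Prop :=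
  ∃ (a b₁ b₂ b₃ : V) (P₁ : G.Walk a b₁) (P₂ : G.Walk a b₂) (P₃ : G.Walk a b₃),
    G.Adj b₁ b₂ ∧ G.Adj b₂ b₃ ∧ G.Adj b₁ b₃ ∧
    P₁.IsPath ∧ P₂.IsPath ∧ P₃.IsPath ∧
    (∀ v, v ∈ P₁.support → v ∈ P₂.support → v = a) ∧
    (∀ v, v ∈ P₁.support → v ∈ P₃.support → v = a) ∧
    (∀ v, v ∈ P₂.support → v ∈ P₃.support → v = a) ∧
    ¬ (P₁.length = 1 ∧ P₂.length = 1) ∧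
    ¬ (P₁.length = 1 ∧ P₃.length = 1) ∧
    ¬ (P₂.length = 1 ∧ P₃.length = 1) ∧
    IsHole G (supp P₁ ∪ supp P₂) ∧
    IsHole G (supp P₁ ∪ supp P₃) ∧
    IsHole G (supp P₂ ∪ supp P₃)

/-- `G` contains a prism as an induced subgraph. -/
def HasPrism (G : SimpleGraph V) : Prop :=
  ∃ (a₁ a₂ a₃ b₁ b₂ b₃ : V) (P₁ : G.Walk a₁ b₁) (P₂ : G.Walk a₂ b₂)
      (P₃ : G.Walk a₃ b₃),
    G.Adj a₁ a₂ ∧ G.Adj a₂ a₃ ∧ G.Adj a₁ a₃ ∧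
    G.Adj b₁ b₂ ∧ G.Adj b₂ b₃ ∧ G.Adj b₁ b₃ ∧
    P₁.IsPath ∧ P₂.IsPath ∧ P₃.IsPath ∧
    (∀ v, v ∈ P₁.support → v ∉ P₂.support) ∧
    (∀ v, v ∈ P₁.support → v ∉ P₃.support) ∧
    (∀ v, v ∈ P₂.support → v ∉ P₃.support) ∧
    IsHole G (supp P₁ ∪ supp P₂) ∧
    IsHole G (supp P₁ ∪ supp P₃) ∧
    IsHole G (supp P₂ ∪ supp P₃)

/-- `G` contains a turtle as an induced subgraph. -/
def HasTurtle (G : SimpleGraph V) : Prop :=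
  ∃ (a₁ b₁ a₂ b₂ x y : V) (P₁ : G.Walk a₁ b₁) (P₂ : G.Walk a₂ b₂),
    P₁.IsPath ∧ P₂.IsPath ∧
    (∀ v, v ∈ P₁.support → v ∉ P₂.support) ∧
    G.Adj a₁ a₂ ∧ G.Adj b₁ b₂ ∧ G.Adj x y ∧
    x ∉ P₁.support ∧ x ∉ P₂.support ∧ y ∉ P₁.support ∧ y ∉ P₂.support ∧
    IsHole G (supp P₁ ∪ supp P₂) ∧
    3 ≤ (nbrsIn G x (supp P₁)).ncard ∧
    (∀ v ∈ P₂.support, ¬ G.Adj x v) ∧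
    3 ≤ (nbrsIn G y (supp P₂)).ncard ∧
    (∀ v ∈ P₁.support, ¬ G.Adj y v)

/-- `G` contains no theta, pyramid, prism, or turtle as an induced subgraph. -/
def TPPTFree (G : SimpleGraph V) : Prop :=
  ¬ HasTheta G ∧ ¬ HasPyramid G ∧ ¬ HasPrism G ∧ ¬ HasTurtle G

/-- The neighborhood of a set `X`: all vertices outside `X` with a neighbor in `X`. -/
def setNbrs (G : SimpleGraph V) (X : Set V) : Set V :=
  {v | v ∉ X ∧ ∃ x ∈ X, G.Adj x v}

/-- `A` is a connected component of `G ∖ C`. -/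
def IsCompOf (G : SimpleGraph V) (C A : Set V) : Prop :=
  A.Nonempty ∧ Disjoint A C ∧ (G.induce A).Connected ∧
    ∀ a ∈ A, ∀ b : V, G.Adj a b → b ∉ C → b ∈ A

/-- `C` is a minimal separator of `G`: there are two distinct components `L`, `R`
of `G ∖ C` with `N(L) = N(R) = C`. -/
def IsMinSep (G : SimpleGraph V) (C : Set V) : Prop :=
  ∃ L R : Set V, IsCompOf G C L ∧ IsCompOf G C R ∧ L ≠ R ∧
    setNbrs G L = C ∧ setNbrs G R = C

/-- A proper separator: a minimal separator that is not a clique. -/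
def IsProperSep (G : SimpleGraph V) (C : Set V) : Prop :=
  IsMinSep G C ∧ ¬ (∀ a ∈ C, ∀ b ∈ C, a ≠ b → G.Adj a b)

/-- `u` is a minor vertex for the hole `H`: `u ∉ H`, `u` has a neighbor in `H` and
all its neighbors in `H` lie in a path of `H` with at most three vertices. -/
def IsMinorFor (G : SimpleGraph V) (u : V) (H : Set V) : Prop :=
  u ∉ H ∧ (nbrsIn G u H).Nonempty ∧
    ∃ a b c : V, a ∈ H ∧ b ∈ H ∧ c ∈ H ∧ G.Adj a b ∧ G.Adj b c ∧ a ≠ c ∧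
      nbrsIn G u H ⊆ {a, b, c}

/-- `u` is a major vertex for the hole `H`. -/
def IsMajorFor (G : SimpleGraph V) (u : V) (H : Set V) : Prop :=
  u ∉ H ∧ (nbrsIn G u H).Nonempty ∧ ¬ IsMinorFor G u H

/-- `u` is a pendant of `H`: it has a unique neighbor in `H`. -/
def IsPendant (G : SimpleGraph V) (u : V) (H : Set V) : Prop :=
  u ∉ H ∧ ∃ a : V, nbrsIn G u H = {a}

/-- `u` is a cap of `H`: it has exactly two neighbors in `H` and they are adjacent. -/
def IsCap (G : SimpleGraph V) (u : V) (H : Set V) : Prop :=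
  u ∉ H ∧ ∃ a b : V, a ≠ b ∧ G.Adj a b ∧ nbrsIn G u H = {a, b}

/-- `u` is a clone of `y` in `H`: its neighbors in `H` are exactly the three
vertices of a path `x-y-z` of `H`. -/
def IsCloneOf (G : SimpleGraph V) (u y : V) (H : Set V) : Prop :=
  u ∉ H ∧ ∃ x z : V, x ∈ H ∧ y ∈ H ∧ z ∈ H ∧ G.Adj x y ∧ G.Adj y z ∧ x ≠ z ∧
    nbrsIn G u H = {x, y, z}

/-- `u` is a clone (of some vertex) in `H`. -/
def IsClone (G : SimpleGraph V) (u : V) (H : Set V) : Prop :=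
  ∃ y, IsCloneOf G u y H

/-- `P` is a `u`-sector of the hole `H`: a path contained in `H` whose ends are
neighbors of `u` and whose interior is anticomplete to `u`. -/
def IsSector (G : SimpleGraph V) (u : V) (H : Set V) {a b : V} (P : G.Walk a b) : Prop :=
  P.IsPath ∧ (∀ v ∈ P.support, v ∈ H) ∧ G.Adj u a ∧ G.Adj u b ∧
    ∀ v ∈ P.support, v ≠ a → v ≠ b → ¬ G.Adj u v

/-- `u` and `v` are nested with respect to the hole `H`: there are distinct
`a, b ∈ H` such that one `ab`-path of `H` contains all neighbors of `u` in `H`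
and the other `ab`-path of `H` contains all neighbors of `v` in `H`. -/
def Nested (G : SimpleGraph V) (u v : V) (H : Set V) : Prop :=
  ∃ a b : V, a ∈ H ∧ b ∈ H ∧ a ≠ b ∧
    ∃ (P Q : G.Walk a b), P.IsPath ∧ Q.IsPath ∧
      supp P ∪ supp Q = H ∧
      (∀ x, x ∈ P.support → x ∈ Q.support → x = a ∨ x = b) ∧
      (∀ x ∈ H, G.Adj u x → x ∈ P.support) ∧
      (∀ x ∈ H, G.Adj v x → x ∈ Q.support)

/-- `u` is a hub for the hole `H`: its neighbors in `H` are exactly four vertices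
`p, q, r, s` appearing in that order along `H`, with `pq, rs ∈ E(G)` and
`ps, qr ∉ E(G)`. -/
def IsHub (G : SimpleGraph V) (u : V) (H : Set V) : Prop :=
  u ∉ H ∧ ∃ (p q r s : V) (A : G.Walk q r) (B : G.Walk s p),
    p ≠ q ∧ p ≠ r ∧ p ≠ s ∧ q ≠ r ∧ q ≠ s ∧ r ≠ s ∧
    nbrsIn G u H = {p, q, r, s} ∧
    G.Adj p q ∧ G.Adj r s ∧ ¬ G.Adj p s ∧ ¬ G.Adj q r ∧
    A.IsPath ∧ B.IsPath ∧
    (∀ v, v ∈ A.support → v ∉ B.support) ∧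
    supp A ∪ supp B = H

/-- `N` is an extended neighborhood of `w` in the hole `H`. -/
def IsExtNbhd (G : SimpleGraph V) (w : V) (H N : Set V) : Prop :=
  ∃ (x y x' y' : V) (Q : G.Walk x y),
    IsSector G w H Q ∧
    x' ∈ H ∧ x' ∉ Q.support ∧ G.Adj x' x ∧
    y' ∈ H ∧ y' ∉ Q.support ∧ G.Adj y' y ∧
    N = supp Q ∪ ({x', y'} ∩ nbrsIn G w H)

/-- `a` and `b` are distant in `H` with respect to `w`: no extended neighborhood
of `w` in `H` contains both `a` and `b`. -/
def Distant (G : SimpleGraph V) (w : V) (H : Set V) (a b : V) : Prop :=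
  a ∈ H ∧ b ∈ H ∧ ∀ N : Set V, IsExtNbhd G w H N → ¬ (a ∈ N ∧ b ∈ N)

/-- `P` is an `(H, w)`-significant path. -/
def IsSignificant (G : SimpleGraph V) (w : V) (H : Set V) {p q : V}
    (P : G.Walk p q) : Prop :=
  P.IsPath ∧ ∃ a b : V, a ∈ H ∧ G.Adj p a ∧ ¬ G.Adj w a ∧ b ∈ H ∧ G.Adj q b ∧
    Distant G w H a b

/-- `v` is a gem-center for the hole `H`. -/
def IsGemCenter (G : SimpleGraph V) (v : V) (H : Set V) : Prop :=
  5 ≤ H.ncard ∧ ∃ h₁ h₂ h₃ h₄ : V, h₁ ∈ H ∧ h₂ ∈ H ∧ h₃ ∈ H ∧ h₄ ∈ H ∧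
    G.Adj h₁ h₂ ∧ G.Adj h₂ h₃ ∧ G.Adj h₃ h₄ ∧ h₁ ≠ h₃ ∧ h₁ ≠ h₄ ∧ h₂ ≠ h₄ ∧
    nbrsIn G v H = {h₁, h₂, h₃, h₄}

/-- `x` is the center of a star cutset of `G`. -/
def IsStarCutsetCenter (G : SimpleGraph V) (x : V) : Prop :=
  ∃ X : Set V, x ∈ X ∧ (∀ y ∈ X, y ≠ x → G.Adj x y) ∧
    ¬ (G.induce (Xᶜ)).Preconnected

/-- `v` is `(c₁, c₂)`-heavy with respect to the hole `H`. -/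
def IsHeavy (G : SimpleGraph V) (c₁ c₂ : V) (H : Set V) (v : V) : Prop :=
  IsMajorFor G v H ∧ Distant G v H c₁ c₂

/-- The pair of paths `HL`, `HR` forms a `(C, c₁, c₂)`-hole with frame
`(c₁, c₂, ℓ₁', ℓ₁, r₁, r₁', ℓ₂', ℓ₂, r₂, r₂')`, where `L` and `R` are the two
full components of the proper separator `C`. -/
def IsCHoleWithFrame (G : SimpleGraph V) (C L R : Set V)
    (c₁ c₂ ℓ₁ ℓ₁' ℓ₂ ℓ₂' r₁ r₁' r₂ r₂' : V) (HL HR : G.Walk c₁ c₂) : Prop :=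
  HL.IsPath ∧ HR.IsPath ∧
  (∀ v, v ∈ HL.support → v ∈ HR.support → v = c₁ ∨ v = c₂) ∧
  IsHole G (supp HL ∪ supp HR) ∧
  c₁ ∈ C ∧ c₂ ∈ C ∧
  (∀ v, v ∈ HL.support → v ≠ c₁ → v ≠ c₂ → v ∈ L) ∧
  (∀ v, v ∈ HR.support → v ≠ c₁ → v ≠ c₂ → v ∈ R) ∧
  (supp HL ∪ supp HR) ∩ C = {c₁, c₂} ∧
  ℓ₁ ∈ HL.support ∧ ℓ₁ ≠ c₂ ∧ G.Adj c₁ ℓ₁ ∧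
  ℓ₂ ∈ HL.support ∧ ℓ₂ ≠ c₁ ∧ G.Adj c₂ ℓ₂ ∧
  r₁ ∈ HR.support ∧ r₁ ≠ c₂ ∧ G.Adj c₁ r₁ ∧
  r₂ ∈ HR.support ∧ r₂ ≠ c₁ ∧ G.Adj c₂ r₂ ∧
  ((ℓ₁ = ℓ₂ ∧ ℓ₁' = ℓ₁) ∨
    (ℓ₁ ≠ ℓ₂ ∧ ℓ₁' ∈ HL.support ∧ ℓ₁' ≠ c₁ ∧ ℓ₁' ≠ c₂ ∧ G.Adj ℓ₁ ℓ₁')) ∧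
  ((ℓ₁ = ℓ₂ ∧ ℓ₂' = ℓ₂) ∨
    (ℓ₁ ≠ ℓ₂ ∧ ℓ₂' ∈ HL.support ∧ ℓ₂' ≠ c₁ ∧ ℓ₂' ≠ c₂ ∧ G.Adj ℓ₂ ℓ₂')) ∧
  ((r₁ = r₂ ∧ r₁' = r₁) ∨
    (r₁ ≠ r₂ ∧ r₁' ∈ HR.support ∧ r₁' ≠ c₁ ∧ r₁' ≠ c₂ ∧ G.Adj r₁ r₁')) ∧
  ((r₁ = r₂ ∧ r₂' = r₂) ∨
    (r₁ ≠ r₂ ∧ r₂' ∈ HR.support ∧ r₂' ≠ c₁ ∧ r₂' ≠ c₂ ∧ G.Adj r₂ r₂'))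

/-- The 3-dimensional hypercube graph: vertices are elements of `{0,1}³`, two
vertices being adjacent exactly when they differ in one coordinate. -/
def cubeGraph : SimpleGraph (Fin 3 → Bool) where
  Adj x y := ∃! i, x i ≠ y i
  symm := by
    constructor
    rintro x y ⟨i, hi, hj⟩
    exact ⟨i, Ne.symm hi, fun j h => hj j (Ne.symm h)⟩
  loopless := by
    constructor
    rintro x ⟨i, hi, -⟩
    exact hi rfl



section Helpers

variable {G : SimpleGraph V}

/-- two distinct members of a 2-element set determine it -/
lemma eq_pair_of_ncard_two {s : Set V} {a b : V} (h : s.ncard = 2)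
    (ha : a ∈ s) (hb : b ∈ s) (hab : a ≠ b) : s = {a, b} := by
  obtain ⟨x, y, hxy, rfl⟩ := Set.ncard_eq_two.mp h
  rcases ha with rfl | ha
  · rcases hb with rfl | hb
    · exact absurd rfl hab
    · rcases hb with rfl; rfl
  · rcases ha with rfl
    rcases hb with rfl | hb
    · ext t; constructor
      · rintro (rfl | rfl) <;> simp
      · rintro (rfl | rfl) <;> simp
    · rcases hb with rfl; exact absurd rfl hab

lemma supp_finite {G : SimpleGraph V} {a b : V} (P : G.Walk a b) : (supp P).Finite :=
  P.support.finite_toSet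

lemma mem_supp {G : SimpleGraph V} {a b : V} {P : G.Walk a b} {w : V} :
    w ∈ supp P ↔ w ∈ P.support := Iff.rfl

/-- A walk with support in S gives reachability in the induced graph. -/
lemma reach_induce {G : SimpleGraph V} {S : Set V} :
    ∀ {a b : V} (W : G.Walk a b), (∀ w ∈ W.support, w ∈ S) →
      ∀ (ha : a ∈ S) (hb : b ∈ S), (G.induce S).Reachable ⟨a, ha⟩ ⟨b, hb⟩ := by
  intro a b W
  induction W with
  | nil => intro _ ha hb; rfl
  | @cons u x c hadj W ih =>
    intro hsub ha hb
    have hx : x ∈ S := hsub x (by simp [Walk.support_cons])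
    have h1 : (G.induce S).Adj ⟨u, ha⟩ ⟨x, hx⟩ := by
      simp [comap_adj, hadj]
    exact (h1.reachable).trans (ih (fun w hw => hsub w (by simp [Walk.support_cons, hw])) hx hb)

/-- A nonempty subset of a connected (induced) set, closed under adjacency, is everything. -/
lemma closed_eq_of_connected {G : SimpleGraph V} {H S : Set V}
    (hconn : (G.induce H).Connected) (hSH : S ⊆ H) (hne : S.Nonempty)
    (hclosed : ∀ w ∈ S, ∀ z ∈ H, G.Adj w z → z ∈ S) : S = H := by
  obtain ⟨s₀, hs₀⟩ := hne
  apply Set.Subset.antisymm hSH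
  intro h hh
  obtain ⟨W⟩ := hconn.preconnected ⟨s₀, hSH hs₀⟩ ⟨h, hh⟩
  clear hconn
  have key : ∀ (x y : ↥H) (W : (G.induce H).Walk x y), (x : V) ∈ S → (y : V) ∈ S := by
    intro x y W
    induction W with
    | nil => exact id
    | @cons u x c hadj W ih =>
      intro hu
      apply ih
      exact hclosed u hu x x.2 hadj
  exact key _ _ W hs₀

/-- A path from a vertex to itself is nil. -/
lemma path_loop_nil {a : V} {P : G.Walk a a} (hP : P.IsPath) : P = Walk.nil := by
  cases P with
  | nil => rfl
  | cons h q =>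
    exfalso
    have := hP.support_nodup
    rw [Walk.support_cons] at this
    exact (List.nodup_cons.mp this).1 q.end_mem_support

/-- An interior vertex of a path has two distinct neighbors on the path. -/
lemma two_nbrs_interior {a b : V} (P : G.Walk a b) (hP : P.IsPath) :
    ∀ w ∈ P.support, w ≠ a → w ≠ b →
      ∃ s t : V, s ≠ t ∧ s ∈ P.support ∧ t ∈ P.support ∧ G.Adj w s ∧ G.Adj w t := by
  induction P with
  | nil => intro w hw hwa _; simp [Walk.support_nil] at hw; exact absurd hw hwa
  | @cons u x c hadj P ih =>
    intro w hw hwa hwb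
    rw [Walk.support_cons, List.mem_cons] at hw
    rcases hw with rfl | hw
    · exact absurd rfl hwa
    by_cases hwx : w = x
    · subst hwx
      -- w = x: neighbors are u and the next vertex of P
      have hPn : ¬ P.Nil := by
        intro hn
        rw [Walk.nil_iff_length_eq] at hn
        have : w = c := by cases P with | nil => rfl | cons h q => simp at hn
        exact hwb this
      obtain ⟨t, ht, q, rfl⟩ := Walk.not_nil_iff.mp hPn
      refine ⟨u, t, ?_, by simp [Walk.support_cons], by simp [Walk.support_cons], hadj.symm, ht⟩
      intro h
      have := hP.support_nodup
      rw [Walk.support_cons] at this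
      exact (List.nodup_cons.mp this).1 (by rw [h]; simp [Walk.support_cons])
    · obtain ⟨s, t, hst, hs, ht, h1, h2⟩ := ih hP.of_cons w hw hwx hwb
      exact ⟨s, t, hst, by simp [Walk.support_cons, hs], by simp [Walk.support_cons, ht], h1, h2⟩

/-- A vertex of a cycle has two distinct neighbors on the cycle. -/
lemma two_nbrs_cycle {a : V} (c : G.Walk a a) (hc : c.IsCycle) :
    ∀ w ∈ c.support,
      ∃ s t : V, s ≠ t ∧ s ∈ c.support ∧ t ∈ c.support ∧ G.Adj w s ∧ G.Adj w t := by
  classical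
  intro w hw
  have hc' := hc.rotate hw
  set c' := c.rotate w hw with hc'def
  have hmem : ∀ z, z ∈ c'.support → z ∈ c.support := by
    intro z hz
    rw [Walk.support_eq_cons c'] at hz
    rcases List.mem_cons.mp hz with rfl | hz
    · exact hw
    · have := (Walk.support_rotate c w hw).mem_iff.mp hz
      exact List.mem_of_mem_tail this
  have hlen : 3 ≤ c'.length := hc'.three_le_length
  have hnn : ¬ c'.Nil := by rw [Walk.nil_iff_length_eq]; omega
  obtain ⟨y₁, h₁, rest, hrest⟩ := Walk.not_nil_iff.mp hnn
  have hrestlen : 2 ≤ rest.length := by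
    have := hrest ▸ hlen; rw [Walk.length_cons] at this; omega
  have hrestpath : rest.IsPath := by
    apply Walk.IsPath.mk'
    have := hc'.2
    rw [hrest, Walk.support_cons] at this
    exact this
  have hrnn : ¬ rest.reverse.Nil := by
    rw [Walk.nil_iff_length_eq, Walk.length_reverse]; omega
  obtain ⟨y₂, h₂, rest₂, hrest₂⟩ := Walk.not_nil_iff.mp hrnn
  have hy₂mem : y₂ ∈ rest.support := by
    have : y₂ ∈ rest.reverse.support := by rw [hrest₂]; simp [Walk.support_cons]
    rwa [Walk.support_reverse, List.mem_reverse] at this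
  have hne : y₁ ≠ y₂ := by
    rintro rfl
    -- then rest₂ : Walk y₂ y₁ = loop, path, so nil, so rest.length = 1
    have hp2 : rest₂.IsPath := (hrest₂ ▸ hrestpath.reverse).of_cons
    have := path_loop_nil hp2
    subst this
    have : rest.reverse.length = 1 := by rw [hrest₂]; simp
    rw [Walk.length_reverse] at this; omega
  refine ⟨y₁, y₂, hne, ?_, ?_, h₁, h₂⟩
  · exact hmem _ (by rw [hrest]; simp [Walk.support_cons])
  · exact hmem _ (by rw [hrest]; simp [Walk.support_cons, hy₂mem])

lemma nodup_length_le_ncard {l : List V} {H : Set V} (hfin : H.Finite)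
    (hnd : l.Nodup) (hsub : ∀ x ∈ l, x ∈ H) : l.length ≤ H.ncard := by
  classical
  rw [← List.toFinset_card_of_nodup hnd]
  have : l.toFinset ⊆ hfin.toFinset := by
    intro x hx
    rw [Set.Finite.mem_toFinset]
    exact hsub x (List.mem_toFinset.mp hx)
  calc l.toFinset.card ≤ hfin.toFinset.card := Finset.card_le_card this
    _ = H.ncard := (Set.ncard_eq_toFinset_card H hfin).symm

/-- Any hole is spanned by a cycle. -/
lemma hole_cycle {H : Set V} (hH : IsHole G H) :
    ∃ (a : V) (c : G.Walk a a), c.IsCycle ∧ {w | w ∈ c.support} = H := by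
  classical
  obtain ⟨hfin, hcard, hconn, hdeg⟩ := hH
  have hne : H.Nonempty := by
    rw [← Set.ncard_pos hfin]; omega
  obtain ⟨h₀, hh₀⟩ := hne
  set T : Set ℕ := {n | ∃ (a b : V) (P : G.Walk a b), P.IsPath ∧
      (∀ w ∈ P.support, w ∈ H) ∧ P.length = n} with hT
  have h0T : 0 ∈ T := ⟨h₀, h₀, Walk.nil, Walk.IsPath.nil, by simp [Walk.support_nil, hh₀], rfl⟩
  have hbdd : BddAbove T := by
    refine ⟨H.ncard, ?_⟩
    rintro n ⟨a, b, P, hP, hsub, rfl⟩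
    have := nodup_length_le_ncard hfin hP.support_nodup hsub
    rw [Walk.length_support] at this
    omega
  have hmem := Nat.sSup_mem ⟨0, h0T⟩ hbdd
  obtain ⟨a, b, P, hP, hsub, hlen⟩ := hmem
  -- maximality: cannot extend at b
  have hmax : ∀ (w : V), G.Adj w b → w ∈ H → w ∈ P.support := by
    intro w hadj hwH
    by_contra hns
    have hwP : w ∉ P.reverse.support := by rwa [Walk.support_reverse, List.mem_reverse]
    have hP' : (Walk.cons hadj P.reverse).IsPath := hP.reverse.cons hwP
    have : P.length + 1 ∈ T := by
      refine ⟨w, a, Walk.cons hadj P.reverse, hP', ?_, by simp⟩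
      intro z hz
      rw [Walk.support_cons, List.mem_cons] at hz
      rcases hz with rfl | hz
      · exact hwH
      · rw [Walk.support_reverse, List.mem_reverse] at hz; exact hsub z hz
    have := le_csSup hbdd this
    omega
  have hbH : b ∈ H := hsub b P.end_mem_support
  obtain ⟨s, t, hst, hpair⟩ := Set.ncard_eq_two.mp (hdeg b hbH)
  have hsn : s ∈ nbrsIn G b H := by rw [hpair]; simp
  have htn : t ∈ nbrsIn G b H := by rw [hpair]; simp
  have hsb : G.Adj b s := hsn.2
  have htb : G.Adj b t := htn.2
  have hsmem : s ∈ P.support := hmax s hsb.symm hsn.1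
  have htmem : t ∈ P.support := hmax t htb.symm htn.1
  -- P has length ≥ 1
  have hPlen : 1 ≤ P.length := by
    by_contra hl
    have : P.length = 0 := by omega
    have hnil : P.Nil := Walk.nil_iff_length_eq.mpr this
    cases P with
    | nil =>
      simp [Walk.support_nil] at hsmem
      subst hsmem
      exact G.irrefl hsb
    | cons h q => simp at hnil
  -- penultimate vertex e
  have hrnn : ¬ P.reverse.Nil := by rw [Walk.nil_iff_length_eq, Walk.length_reverse]; omega
  obtain ⟨e, hbe, Q, hQeq⟩ := Walk.not_nil_iff.mp hrnn
  have hQpath : Q.IsPath := (hQeq ▸ hP.reverse).of_cons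
  have hbQ : b ∉ Q.support := by
    have := (hQeq ▸ hP.reverse).support_nodup
    rw [Walk.support_cons] at this
    exact (List.nodup_cons.mp this).1
  have hQsub : ∀ w ∈ Q.support, w ∈ H := by
    intro w hw
    have : w ∈ P.reverse.support := by rw [hQeq, Walk.support_cons]; simp [hw]
    rw [Walk.support_reverse, List.mem_reverse] at this
    exact hsub w this
  have heH : e ∈ H := hQsub e Q.start_mem_support
  have hemem : e ∈ ({s, t} : Set V) := by
    rw [← hpair]; exact ⟨heH, hbe⟩
  -- s' := the one of {s,t} different from e
  obtain ⟨s', hs'e, hbs', hs'P, hs'H⟩ :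
      ∃ s', s' ≠ e ∧ G.Adj b s' ∧ s' ∈ P.support ∧ s' ∈ H := by
    rcases hemem with rfl | rfl
    · exact ⟨t, fun h => hst h.symm, htb, htmem, htn.1⟩
    · exact ⟨s, hst, hsb, hsmem, hsn.1⟩
  have hs'b : s' ≠ b := fun h => by subst h; exact G.irrefl hbs'
  have hs'Q : s' ∈ Q.support := by
    have : s' ∈ P.reverse.support := by rwa [Walk.support_reverse, List.mem_reverse]
    rw [hQeq, Walk.support_cons, List.mem_cons] at this
    rcases this with rfl | h
    · exact absurd rfl hs'b
    · exact h
  set tQ := Q.takeUntil s' hs'Q with htQ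
  have htQpath : tQ.IsPath := hQpath.takeUntil hs'Q
  have htQsub : ∀ w ∈ tQ.support, w ∈ Q.support := fun w hw =>
    Walk.support_takeUntil_subset Q hs'Q hw
  have hbtQ : b ∉ tQ.support := fun h => hbQ (htQsub b h)
  -- the closing walk W' : Walk s' b
  set W0 : G.Walk b s' := Walk.cons hbe tQ with hW0
  have hW0path : W0.IsPath := htQpath.cons hbtQ
  set W' := W0.reverse with hW'
  set c : G.Walk b b := Walk.cons hbs' W' with hc
  have hcyc : c.IsCycle := by
    rw [hc, Walk.cons_isCycle_iff]
    refine ⟨hW0path.reverse, ?_⟩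
    intro hedge
    rw [hW', Walk.edges_reverse, List.mem_reverse, hW0] at hedge
    rw [Walk.edges_cons, List.mem_cons] at hedge
    rcases hedge with h | h
    · rw [Sym2.eq_iff] at h
      rcases h with ⟨-, h2⟩ | ⟨h1, -⟩
      · exact hs'e h2
      · exact G.irrefl (h1 ▸ hbe)
    · exact hbtQ (Walk.fst_mem_support_of_mem_edges tQ h)
  refine ⟨b, c, hcyc, ?_⟩
  have hCsub : ∀ w ∈ c.support, w ∈ H := by
    intro w hw
    rw [hc, Walk.support_cons, List.mem_cons] at hw
    rcases hw with rfl | hw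
    · exact hbH
    rw [hW', Walk.support_reverse, List.mem_reverse, hW0, Walk.support_cons,
      List.mem_cons] at hw
    rcases hw with rfl | hw
    · exact hbH
    · exact hQsub w (htQsub w hw)
  apply closed_eq_of_connected hconn hCsub ⟨b, by simp only [Set.mem_setOf_eq, hc, Walk.support_cons]; exact List.mem_cons_self⟩
  intro w hw z hzH hadj
  obtain ⟨y₁, y₂, hy12, hy₁, hy₂, ha₁, ha₂⟩ := two_nbrs_cycle c hcyc w hw
  have hwH : w ∈ H := hCsub w hw
  have : nbrsIn G w H = {y₁, y₂} :=
    eq_pair_of_ncard_two (hdeg w hwH) ⟨hCsub _ hy₁, ha₁⟩ ⟨hCsub _ hy₂, ha₂⟩ hy12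
  have hz : z ∈ nbrsIn G w H := ⟨hzH, hadj⟩
  rw [this] at hz
  rcases hz with rfl | rfl
  · exact hy₁
  · exact hy₂

/-- Completing an "arc" by a vertex adjacent exactly to its two endpoints gives a hole. -/
lemma hole_arc {H : Set V} (hH : IsHole G H) {p q v : V} (A : G.Walk p q)
    (hA : A.IsPath) (hsub : ∀ w ∈ A.support, w ∈ H) (hlen : 2 ≤ A.length)
    (hvH : v ∉ H) (hpq : p ≠ q)
    (hvnbrs : nbrsIn G v H = {p, q})
    {sp sq : V}
    (hsp : nbrsIn G p H ∩ supp A = {sp})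
    (hsq : nbrsIn G q H ∩ supp A = {sq}) :
    IsHole G (supp A ∪ {v}) := by
  classical
  have hvp : G.Adj v p := by
    have : p ∈ nbrsIn G v H := by rw [hvnbrs]; simp
    exact this.2
  have hvq : G.Adj v q := by
    have : q ∈ nbrsIn G v H := by rw [hvnbrs]; simp
    exact this.2
  have hvint : ∀ w, w ∈ A.support → w ≠ p → w ≠ q → ¬ G.Adj v w := by
    intro w hw hwp hwq hadj
    have : w ∈ nbrsIn G v H := ⟨hsub w hw, hadj⟩
    rw [hvnbrs] at this
    rcases this with rfl | rfl
    · exact hwp rfl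
    · exact hwq rfl
  have hvA : v ∉ A.support := fun h => hvH (hsub v h)
  have hspm : sp ∈ nbrsIn G p H ∩ supp A := by rw [hsp]; rfl
  have hsqm : sq ∈ nbrsIn G q H ∩ supp A := by rw [hsq]; rfl
  set S : Set V := supp A ∪ {v} with hS
  have hpS : p ∈ S := Or.inl A.start_mem_support
  have hqS : q ∈ S := Or.inl A.end_mem_support
  have hvS : v ∈ S := Or.inr rfl
  have hfinA : (supp A).Finite := A.support.finite_toSet
  have hfinS : S.Finite := hfinA.union (Set.finite_singleton v)
  have hncardA : (supp A).ncard = A.length + 1 := by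
    have h1 : (supp A) = ↑A.support.toFinset := by
      ext w; simp [supp]
    rw [h1, Set.ncard_coe_finset, List.toFinset_card_of_nodup hA.support_nodup,
      Walk.length_support]
  refine ⟨hfinS, ?_, ?_, ?_⟩
  · -- ncard ≥ 4
    have : S = insert v (supp A) := by rw [hS, Set.union_singleton]
    rw [this, Set.ncard_insert_of_notMem (show v ∉ supp A from hvA) hfinA, hncardA]
    omega
  · -- connected
    rw [connected_iff]
    constructor
    · intro x y
      have key : ∀ (z : V) (hz : z ∈ S), (G.induce S).Reachable ⟨z, hz⟩ ⟨p, hpS⟩ := by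
        intro z hz
        rcases hz with hz | hz
        · have := A.takeUntil z hz
          exact (reach_induce (A.takeUntil z hz)
            (fun w hw => (Or.inl (Walk.support_takeUntil_subset A hz hw) : w ∈ S)) hpS
            (Or.inl hz)).symm
        · rcases hz with rfl
          have : (G.induce S).Adj ⟨z, Or.inr rfl⟩ ⟨p, hpS⟩ := by
            simp [comap_adj, hvp]
          exact this.reachable
      exact (key x.1 x.2).trans (key y.1 y.2).symm
    · exact ⟨⟨p, hpS⟩⟩
  · -- degrees
    intro w hw
    rcases hw with hw | hw
    · by_cases hwp : w = p
      · subst hwp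
        have : nbrsIn G w S = {sp, v} := by
          ext z
          constructor
          · rintro ⟨hz | hz, hadj⟩
            · have : z ∈ nbrsIn G w H ∩ supp A := ⟨⟨hsub z hz, hadj⟩, hz⟩
              rw [hsp] at this
              exact Or.inl this
            · rcases hz with rfl; exact Or.inr rfl
          · rintro (rfl | rfl)
            · exact ⟨Or.inl hspm.2, hspm.1.2⟩
            · exact ⟨Or.inr rfl, hvp.symm⟩
        rw [this]
        rw [Set.ncard_pair]
        intro h
        exact hvH (h ▸ hspm.1.1)
      · by_cases hwq : w = q
        · subst hwq
          have : nbrsIn G w S = {sq, v} := by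
            ext z
            constructor
            · rintro ⟨hz | hz, hadj⟩
              · have : z ∈ nbrsIn G w H ∩ supp A := ⟨⟨hsub z hz, hadj⟩, hz⟩
                rw [hsq] at this
                exact Or.inl this
              · rcases hz with rfl; exact Or.inr rfl
            · rintro (rfl | rfl)
              · exact ⟨Or.inl hsqm.2, hsqm.1.2⟩
              · exact ⟨Or.inr rfl, hvq.symm⟩
          rw [this, Set.ncard_pair]
          intro h
          exact hvH (h ▸ hsqm.1.1)
        · -- interior vertex
          obtain ⟨s, t, hst, hs, ht, h1, h2⟩ := two_nbrs_interior A hA w hw hwp hwq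
          have hnb : nbrsIn G w H = {s, t} :=
            eq_pair_of_ncard_two (hH.2.2.2 w (hsub w hw)) ⟨hsub s hs, h1⟩ ⟨hsub t ht, h2⟩ hst
          have : nbrsIn G w S = {s, t} := by
            ext z
            constructor
            · rintro ⟨hz | hz, hadj⟩
              · have : z ∈ nbrsIn G w H := ⟨hsub z hz, hadj⟩
                rwa [hnb] at this
              · rcases hz with rfl
                exact absurd hadj.symm (hvint w hw hwp hwq)
            · rintro (rfl | rfl)
              · exact ⟨Or.inl hs, h1⟩
              · exact ⟨Or.inl ht, h2⟩
          rw [this, Set.ncard_pair hst]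
    · rcases hw with rfl
      have : nbrsIn G w S = {p, q} := by
        ext z
        constructor
        · rintro ⟨hz | hz, hadj⟩
          · have : z ∈ nbrsIn G w H := ⟨hsub z hz, hadj⟩
            rwa [hvnbrs] at this
          · rcases hz with rfl
            exact absurd hadj (G.irrefl)
        · rintro (rfl | rfl)
          · exact ⟨hpS, hvp⟩
          · exact ⟨hqS, hvq⟩
      rw [this, Set.ncard_pair hpq]

/-- rotating a cycle at a support vertex keeps the support set -/
lemma supp_rotate [DecidableEq V] {a w : V} (c : G.Walk a a) (hc : c.IsCycle) (hw : w ∈ c.support) :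
    ∀ z, (z ∈ (c.rotate w hw).support ↔ z ∈ c.support) := by
  intro z
  have h1 := (Walk.support_rotate c w hw).mem_iff (a := z)
  have hcnn : ¬ c.Nil := hc.not_nil
  have hrnn : ¬ (c.rotate w hw).Nil := (hc.rotate hw).not_nil
  -- for closed nonnil walks, support membership = tail membership
  have key : ∀ (b : V) (d : G.Walk b b), ¬ d.Nil → ∀ y, (y ∈ d.support ↔ y ∈ d.support.tail) := by
    intro b d hd y
    constructor
    · intro hy
      rw [Walk.support_eq_cons d, List.mem_cons] at hy
      rcases hy with rfl | hy
      · obtain ⟨t, ht, q, rfl⟩ := Walk.not_nil_iff.mp hd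
        rw [Walk.support_cons]
        exact q.end_mem_support
      · exact hy
    · intro hy
      rw [Walk.support_eq_cons d, List.mem_cons]
      exact Or.inr hy
  exact (key _ _ hrnn z).trans (h1.trans (key _ _ hcnn z).symm)

lemma theta_of_two_nbrs {H : Set V} (hH : IsHole G H) {p q v : V}
    (hvH : v ∉ H) (hpq : p ≠ q) (hnadj : ¬ G.Adj p q)
    (hvnbrs : nbrsIn G v H = {p, q}) : HasTheta G := by
  classical
  have hpH : p ∈ H := by
    have : p ∈ nbrsIn G v H := by rw [hvnbrs]; simp
    exact this.1
  have hqH : q ∈ H := by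
    have : q ∈ nbrsIn G v H := by rw [hvnbrs]; simp
    exact this.1
  have hvp : G.Adj v p := by
    have : p ∈ nbrsIn G v H := by rw [hvnbrs]; simp
    exact this.2
  have hvq : G.Adj v q := by
    have : q ∈ nbrsIn G v H := by rw [hvnbrs]; simp
    exact this.2
  obtain ⟨a₀, c₀, hcyc₀, hsupp₀⟩ := hole_cycle hH
  have hpc₀ : p ∈ c₀.support := by rw [← Set.mem_setOf_eq (p := fun w => w ∈ c₀.support), hsupp₀]; exact hpH
  set c := c₀.rotate p hpc₀ with hcdef
  have hcyc : c.IsCycle := hcyc₀.rotate hpc₀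
  have hsupp : ∀ z, z ∈ c.support ↔ z ∈ H := by
    intro z
    rw [supp_rotate c₀ hcyc₀ hpc₀ z, ← hsupp₀]
    rfl
  have hcnn : ¬ c.Nil := hcyc.not_nil
  obtain ⟨w₁, hpw₁, rest, hresteq⟩ := Walk.not_nil_iff.mp hcnn
  have hrestpath : rest.IsPath := by
    apply Walk.IsPath.mk'
    have := hcyc.2
    rw [hresteq, Walk.support_cons] at this
    exact this
  have hrestsupp : ∀ z, z ∈ rest.support → z ∈ H := by
    intro z hz
    rw [← hsupp, hresteq, Walk.support_cons]
    simp [hz]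
  have hqrest : q ∈ rest.support := by
    have : q ∈ c.support := (hsupp q).mpr hqH
    rw [hresteq, Walk.support_cons, List.mem_cons] at this
    rcases this with rfl | h
    · exact absurd rfl hpq.symm
    · exact h
  set tU := rest.takeUntil q hqrest with htUdef
  set dU := rest.dropUntil q hqrest with hdUdef
  have hspec : tU.append dU = rest := rest.take_spec hqrest
  have htUpath : tU.IsPath := hrestpath.takeUntil hqrest
  have hdUpath : dU.IsPath := hrestpath.dropUntil hqrest
  have hsplit : rest.support = tU.support ++ dU.support.tail := by
    rw [← hspec, Walk.support_append]
  have hnd : rest.support.Nodup := hrestpath.support_nodup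
  rw [hsplit] at hnd
  have hdisj := List.disjoint_of_nodup_append hnd
  -- p is in dU.support.tail
  have hpdU : p ∈ dU.support := dU.end_mem_support
  have hpdUt : p ∈ dU.support.tail := by
    rw [Walk.support_eq_cons dU, List.mem_cons] at hpdU
    rcases hpdU with rfl | h
    · exact absurd rfl hpq.symm
    · exact h
  have hptU : p ∉ tU.support := fun h => (hdisj h) hpdUt
  set arc1 : G.Walk p q := Walk.cons hpw₁ tU with harc1def
  have harc1path : arc1.IsPath := htUpath.cons hptU
  set arc2 : G.Walk p q := dU.reverse with harc2def
  have harc2path : arc2.IsPath := hdUpath.reverse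
  have harc1supp : ∀ z, z ∈ arc1.support ↔ (z = p ∨ z ∈ tU.support) := by
    intro z; rw [harc1def, Walk.support_cons]; simp
  have harc2supp : ∀ z, z ∈ arc2.support ↔ z ∈ dU.support := by
    intro z; rw [harc2def, Walk.support_reverse, List.mem_reverse]
  have harc1sub : ∀ z ∈ arc1.support, z ∈ H := by
    intro z hz
    rcases (harc1supp z).mp hz with rfl | hz
    · exact hpH
    · exact hrestsupp z (by rw [hsplit]; exact List.mem_append_left _ hz)
  have harc2sub : ∀ z ∈ arc2.support, z ∈ H := by
    intro z hz
    rw [harc2supp] at hz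
    rw [Walk.support_eq_cons dU, List.mem_cons] at hz
    rcases hz with rfl | hz
    · exact hqH
    · exact hrestsupp z (by rw [hsplit]; exact List.mem_append_right _ hz)
  -- lengths
  have htUnn : ¬ tU.Nil := by
    intro hn
    have hwq : w₁ = q := Walk.eq_of_length_eq_zero (Walk.nil_iff_length_eq.mp hn)
    exact hnadj (hwq ▸ hpw₁)
  have harc1len : 2 ≤ arc1.length := by
    have h1 : arc1.length = tU.length + 1 := by rw [harc1def, Walk.length_cons]
    have h2 : tU.length ≠ 0 := fun h => htUnn (Walk.nil_iff_length_eq.mpr h)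
    omega
  have hdUnn : ¬ dU.Nil := by
    intro hn
    exact hpq (Walk.eq_of_length_eq_zero (Walk.nil_iff_length_eq.mp hn)).symm
  obtain ⟨d₂, hqd₂, D₂, hD₂eq⟩ := Walk.not_nil_iff.mp hdUnn
  have hD₂nn : ¬ D₂.Nil := by
    intro hn
    have hdp : d₂ = p := Walk.eq_of_length_eq_zero (Walk.nil_iff_length_eq.mp hn)
    rw [hdp] at hqd₂
    exact hnadj hqd₂.symm
  have harc2len : 2 ≤ arc2.length := by
    have h1 : arc2.length = dU.length := by rw [harc2def, Walk.length_reverse]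
    have h2 : dU.length = D₂.length + 1 := by rw [hD₂eq, Walk.length_cons]
    have h3 : D₂.length ≠ 0 := fun h => hD₂nn (Walk.nil_iff_length_eq.mpr h)
    omega
  -- second vertices and penultimate vertices
  have hd₂dUt : d₂ ∈ dU.support.tail := by
    rw [hD₂eq, Walk.support_cons]
    exact D₂.start_mem_support
  have hdUrnn : ¬ dU.reverse.Nil := by rwa [Walk.nil_iff_length_eq, Walk.length_reverse, ← Walk.nil_iff_length_eq]
  obtain ⟨e₂, hpe₂, E₂, hE₂eq⟩ := Walk.not_nil_iff.mp hdUrnn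
  have he₂dU : e₂ ∈ dU.support := by
    have : e₂ ∈ dU.reverse.support := by rw [hE₂eq, Walk.support_cons]; simp
    rwa [Walk.support_reverse, List.mem_reverse] at this
  have he₂q : e₂ ≠ q := fun h => hnadj (by rw [← h]; exact hpe₂)
  have he₂dUt : e₂ ∈ dU.support.tail := by
    rw [Walk.support_eq_cons dU, List.mem_cons] at he₂dU
    rcases he₂dU with rfl | h
    · exact absurd rfl he₂q
    · exact h
  have he₂tU : e₂ ∉ tU.support := fun h => (hdisj h) he₂dUt
  have htUrnn : ¬ tU.reverse.Nil := by
    rwa [Walk.nil_iff_length_eq, Walk.length_reverse, ← Walk.nil_iff_length_eq]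
  obtain ⟨t₂, hqt₂, T₂, hT₂eq⟩ := Walk.not_nil_iff.mp htUrnn
  have ht₂tU : t₂ ∈ tU.support := by
    have : t₂ ∈ tU.reverse.support := by rw [hT₂eq, Walk.support_cons]; simp
    rwa [Walk.support_reverse, List.mem_reverse] at this
  have ht₂dUt : t₂ ∉ dU.support.tail := fun h => (hdisj ht₂tU) h
  have hw₁tU : w₁ ∈ tU.support := tU.start_mem_support
  have hw₁dUt : w₁ ∉ dU.support.tail := fun h => (hdisj hw₁tU) h
  have hw₁H : w₁ ∈ H := harc1sub w₁ ((harc1supp w₁).mpr (Or.inr hw₁tU))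
  have he₂H : e₂ ∈ H := harc2sub e₂ ((harc2supp e₂).mpr he₂dU)
  have ht₂H : t₂ ∈ H := harc1sub t₂ ((harc1supp t₂).mpr (Or.inr ht₂tU))
  have hd₂H : d₂ ∈ H := harc2sub d₂ ((harc2supp d₂).mpr (by
    rw [Walk.support_eq_cons dU]; exact List.mem_cons_of_mem _ hd₂dUt))
  have hw₁e₂ : w₁ ≠ e₂ := fun h => hw₁dUt (h ▸ he₂dUt)
  have ht₂d₂ : t₂ ≠ d₂ := fun h => ht₂dUt (h ▸ hd₂dUt)
  -- p's neighbors in H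
  have hpnbrs : nbrsIn G p H = {w₁, e₂} :=
    eq_pair_of_ncard_two (hH.2.2.2 p hpH) ⟨hw₁H, hpw₁⟩ ⟨he₂H, hpe₂⟩ hw₁e₂
  have hqnbrs : nbrsIn G q H = {t₂, d₂} :=
    eq_pair_of_ncard_two (hH.2.2.2 q hqH) ⟨ht₂H, hqt₂⟩ ⟨hd₂H, hqd₂⟩ ht₂d₂
  -- intersection facts
  have hsp1 : nbrsIn G p H ∩ supp arc1 = {w₁} := by
    ext z
    constructor
    · rintro ⟨hz1, hz2⟩
      rw [hpnbrs] at hz1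
      rcases hz1 with h | h
      · exact h
      · exfalso
        rw [h] at hz2
        rcases (harc1supp e₂).mp hz2 with hh | hh
        · exact G.irrefl (hh ▸ hpe₂)
        · exact he₂tU hh
    · intro hz
      have hz' : z = w₁ := hz
      rw [hz']
      exact ⟨⟨hw₁H, hpw₁⟩, (harc1supp w₁).mpr (Or.inr hw₁tU)⟩
  have hsq1 : nbrsIn G q H ∩ supp arc1 = {t₂} := by
    ext z
    constructor
    · rintro ⟨hz1, hz2⟩
      rw [hqnbrs] at hz1
      rcases hz1 with h | h
      · exact h
      · exfalso
        rw [h] at hz2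
        rcases (harc1supp d₂).mp hz2 with hh | hh
        · exact hnadj (hh ▸ hqd₂).symm
        · exact (hdisj hh) hd₂dUt
    · intro hz
      have hz' : z = t₂ := hz
      rw [hz']
      exact ⟨⟨ht₂H, hqt₂⟩, (harc1supp t₂).mpr (Or.inr ht₂tU)⟩
  have hsp2 : nbrsIn G p H ∩ supp arc2 = {e₂} := by
    ext z
    constructor
    · rintro ⟨hz1, hz2⟩
      rw [hpnbrs] at hz1
      rcases hz1 with h | h
      · exfalso
        rw [h] at hz2
        have hmem : w₁ ∈ dU.support := (harc2supp w₁).mp hz2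
        rw [Walk.support_eq_cons dU, List.mem_cons] at hmem
        rcases hmem with hh | hh
        · exact hnadj (hh ▸ hpw₁)
        · exact hw₁dUt hh
      · exact h
    · intro hz
      have hz' : z = e₂ := hz
      rw [hz']
      exact ⟨⟨he₂H, hpe₂⟩, (harc2supp e₂).mpr he₂dU⟩
  have hsq2 : nbrsIn G q H ∩ supp arc2 = {d₂} := by
    ext z
    constructor
    · rintro ⟨hz1, hz2⟩
      rw [hqnbrs] at hz1
      rcases hz1 with h | h
      · exfalso
        rw [h] at hz2
        have hmem : t₂ ∈ dU.support := (harc2supp t₂).mp hz2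
        rw [Walk.support_eq_cons dU, List.mem_cons] at hmem
        rcases hmem with hh | hh
        · exact G.irrefl (hh ▸ hqt₂)
        · exact ht₂dUt hh
      · exact h
    · intro hz
      have hz' : z = d₂ := hz
      rw [hz']
      exact ⟨⟨hd₂H, hqd₂⟩, (harc2supp d₂).mpr (by
        rw [Walk.support_eq_cons dU]; exact List.mem_cons_of_mem _ hd₂dUt)⟩
  -- union of arcs is H
  have hunion : supp arc1 ∪ supp arc2 = H := by
    ext z
    constructor
    · rintro (hz | hz)
      · exact harc1sub z hz
      · exact harc2sub z hz
    · intro hz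
      have : z ∈ c.support := (hsupp z).mpr hz
      rw [hresteq, Walk.support_cons, List.mem_cons] at this
      rcases this with rfl | hz'
      · exact Or.inl ((harc1supp z).mpr (Or.inl rfl))
      · rw [hsplit, List.mem_append] at hz'
        rcases hz' with h | h
        · exact Or.inl ((harc1supp z).mpr (Or.inr h))
        · exact Or.inr ((harc2supp z).mpr (by
            rw [Walk.support_eq_cons dU]; exact List.mem_cons_of_mem _ h))
  -- the short path through v
  have hpv : p ≠ v := fun h => hvH (h ▸ hpH)
  have hqv : q ≠ v := fun h => hvH (h ▸ hqH)
  set P₃ : G.Walk p q := Walk.cons hvp.symm (Walk.cons hvq Walk.nil) with hP₃def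
  have hP₃path : P₃.IsPath := by
    rw [Walk.isPath_def, hP₃def]
    simp [Walk.support_cons, Walk.support_nil]
    exact ⟨⟨hpv, hpq⟩, fun h => hqv h.symm⟩
  have hP₃supp : ∀ z, z ∈ P₃.support ↔ (z = p ∨ z = v ∨ z = q) := by
    intro z; rw [hP₃def]; simp [Walk.support_cons, Walk.support_nil]
  -- arcs ∪ {v}
  have hsupparc1v : supp arc1 ∪ supp P₃ = supp arc1 ∪ {v} := by
    ext z
    constructor
    · rintro (hz | hz)
      · exact Or.inl hz
      · rcases (hP₃supp z).mp hz with rfl | rfl | rfl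
        · exact Or.inl (by exact arc1.start_mem_support)
        · exact Or.inr rfl
        · exact Or.inl (by exact arc1.end_mem_support)
    · rintro (hz | hz)
      · exact Or.inl hz
      · rcases hz with rfl
        exact Or.inr ((hP₃supp z).mpr (Or.inr (Or.inl rfl)))
  have hsupparc2v : supp arc2 ∪ supp P₃ = supp arc2 ∪ {v} := by
    ext z
    constructor
    · rintro (hz | hz)
      · exact Or.inl hz
      · rcases (hP₃supp z).mp hz with rfl | rfl | rfl
        · exact Or.inl (by exact arc2.start_mem_support)
        · exact Or.inr rfl
        · exact Or.inl (by exact arc2.end_mem_support)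
    · rintro (hz | hz)
      · exact Or.inl hz
      · rcases hz with rfl
        exact Or.inr ((hP₃supp z).mpr (Or.inr (Or.inl rfl)))
  refine ⟨p, q, arc1, arc2, P₃, hpq, hnadj, harc1path, harc2path, hP₃path,
    harc1len, harc2len, by rw [hP₃def]; simp, ?_, ?_, ?_, ?_, ?_, ?_⟩
  · -- arc1 ∩ arc2
    intro z hz1 hz2
    rcases (harc1supp z).mp hz1 with rfl | hz1'
    · exact Or.inl rfl
    have : z ∈ dU.support := (harc2supp z).mp hz2
    rw [Walk.support_eq_cons dU, List.mem_cons] at this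
    rcases this with rfl | h
    · exact Or.inr rfl
    · exact absurd h (fun h => (hdisj hz1') h)
  · -- arc1 ∩ P₃
    intro z hz1 hz3
    rcases (hP₃supp z).mp hz3 with rfl | rfl | rfl
    · exact Or.inl rfl
    · exact absurd (harc1sub z hz1) hvH
    · exact Or.inr rfl
  · -- arc2 ∩ P₃
    intro z hz2 hz3
    rcases (hP₃supp z).mp hz3 with rfl | rfl | rfl
    · exact Or.inl rfl
    · exact absurd (harc2sub z hz2) hvH
    · exact Or.inr rfl
  · rw [hunion]; exact hH
  · rw [hsupparc1v]
    exact hole_arc hH arc1 harc1path harc1sub harc1len hvH hpq hvnbrs hsp1 hsq1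
  · rw [hsupparc2v]
    exact hole_arc hH arc2 harc2path harc2sub harc2len hvH hpq hvnbrs hsp2 hsq2

/-- build a turtle from a clone and a heavy major vertex -/
lemma buildTurtle {H : Set V} (hH : IsHole G H) {x y z u v : V}
    (hxH : x ∈ H) (hyH : y ∈ H) (hzH : z ∈ H)
    (hxy : G.Adj x y) (hyz : G.Adj y z) (hxz : x ≠ z)
    (huH : u ∉ H) (hunbrs : nbrsIn G u H = {x, y, z})
    (hvH : v ∉ H) (huv : G.Adj u v)
    (hvx : ¬ G.Adj v x) (hvy : ¬ G.Adj v y) (hvz : ¬ G.Adj v z)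
    (hvcard : 3 ≤ (nbrsIn G v H).ncard)
    (R : G.Walk x z) (hR : R.IsPath) (hsuppR : supp R = H \ {y}) :
    HasTurtle G := by
  classical
  have hRsub : ∀ w ∈ R.support, w ∈ H := by
    intro w hw
    have : w ∈ supp R := hw
    rw [hsuppR] at this
    exact this.1
  have hyR : y ∉ R.support := by
    intro hy
    have : y ∈ supp R := hy
    rw [hsuppR] at this
    exact this.2 rfl
  -- R has length ≥ 2
  have hHcard := hH.2.1
  have hRlen : 2 ≤ R.length := by
    have h1 : (supp R).ncard = R.length + 1 := by
      have h2 : (supp R) = ↑R.support.toFinset := by ext w; simp [supp]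
      rw [h2, Set.ncard_coe_finset, List.toFinset_card_of_nodup hR.support_nodup,
        Walk.length_support]
    have h3 : (H \ {y}).ncard = H.ncard - 1 := by
      rw [← Set.ncard_diff_singleton_add_one hyH hH.1]
      omega
    rw [hsuppR, h3] at h1
    omega
  have hRnn : ¬ R.Nil := by rw [Walk.nil_iff_length_eq]; omega
  obtain ⟨a₂, hxa, R', hR'eq⟩ := Walk.not_nil_iff.mp hRnn
  have hR'path : R'.IsPath := (hR'eq ▸ hR).of_cons
  have hxR' : x ∉ R'.support := by
    have := (hR'eq ▸ hR).support_nodup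
    rw [Walk.support_cons] at this
    exact (List.nodup_cons.mp this).1
  have hR'nn : ¬ R'.reverse.Nil := by
    rw [Walk.nil_iff_length_eq, Walk.length_reverse]
    have : R.length = R'.length + 1 := by rw [hR'eq, Walk.length_cons]
    omega
  obtain ⟨b₂, hzb, R'', hR''eq⟩ := Walk.not_nil_iff.mp hR'nn
  have hR''path : R''.IsPath := (hR''eq ▸ hR'path.reverse).of_cons
  have hzR'' : z ∉ R''.support := by
    have := (hR''eq ▸ hR'path.reverse).support_nodup
    rw [Walk.support_cons] at this
    exact (List.nodup_cons.mp this).1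
  set P₂ : G.Walk a₂ b₂ := R''.reverse with hP₂def
  have hP₂path : P₂.IsPath := hR''path.reverse
  have hP₂supp : ∀ w, w ∈ P₂.support ↔ (w ∈ H ∧ w ≠ x ∧ w ≠ y ∧ w ≠ z) := by
    intro w
    have h1 : w ∈ P₂.support ↔ w ∈ R''.support := by
      rw [hP₂def, Walk.support_reverse, List.mem_reverse]
    have h2 : w ∈ R'.support ↔ (w = z ∨ w ∈ R''.support) := by
      rw [← List.mem_reverse, ← Walk.support_reverse, hR''eq, Walk.support_cons]
      simp
    have h3 : w ∈ R.support ↔ (w = x ∨ w ∈ R'.support) := by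
      rw [hR'eq, Walk.support_cons]; simp
    have h4 : w ∈ R.support ↔ (w ∈ H ∧ w ≠ y) := by
      constructor
      · intro hw
        have : w ∈ supp R := hw
        rw [hsuppR] at this
        exact ⟨this.1, this.2⟩
      · intro hw
        have : w ∈ H \ {y} := ⟨hw.1, hw.2⟩
        rw [← hsuppR] at this
        exact this
    rw [h1]
    constructor
    · intro hw
      have hwR' : w ∈ R'.support := h2.mpr (Or.inr hw)
      have hwR : w ∈ R.support := h3.mpr (Or.inr hwR')
      refine ⟨(h4.mp hwR).1, ?_, (h4.mp hwR).2, ?_⟩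
      · rintro rfl; exact hxR' hwR'
      · rintro rfl; exact hzR'' hw
    · rintro ⟨hwH, hwx, hwy, hwz⟩
      have hwR : w ∈ R.support := h4.mpr ⟨hwH, hwy⟩
      have hwR' : w ∈ R'.support := by
        rcases h3.mp hwR with rfl | h
        · exact absurd rfl hwx
        · exact h
      rcases h2.mp hwR' with rfl | h
      · exact absurd rfl hwz
      · exact h
  set P₁ : G.Walk x z := Walk.cons hxy (Walk.cons hyz Walk.nil) with hP₁def
  have hP₁supp : ∀ w, w ∈ P₁.support ↔ (w = x ∨ w = y ∨ w = z) := by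
    intro w; rw [hP₁def]; simp [Walk.support_cons, Walk.support_nil]
  have hyxne : y ≠ x := fun h => G.irrefl (h ▸ hxy)
  have hyzne : y ≠ z := fun h => G.irrefl (h ▸ hyz)
  have hP₁path : P₁.IsPath := by
    rw [Walk.isPath_def, hP₁def]
    simp [Walk.support_cons, Walk.support_nil]
    exact ⟨⟨hyxne.symm, hxz⟩, hyzne⟩
  have hux : G.Adj u x := by
    have : x ∈ nbrsIn G u H := by rw [hunbrs]; simp
    exact this.2
  have huy : G.Adj u y := by
    have : y ∈ nbrsIn G u H := by rw [hunbrs]; simp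
    exact this.2
  have huz : G.Adj u z := by
    have : z ∈ nbrsIn G u H := by rw [hunbrs]; simp
    exact this.2
  have hdisj : ∀ w, w ∈ P₁.support → w ∉ P₂.support := by
    intro w hw hw2
    rw [hP₁supp] at hw
    rw [hP₂supp] at hw2
    rcases hw with rfl | rfl | rfl
    · exact hw2.2.1 rfl
    · exact hw2.2.2.1 rfl
    · exact hw2.2.2.2 rfl
  have hunion : supp P₁ ∪ supp P₂ = H := by
    ext w
    constructor
    · rintro (hw | hw)
      · have hw : w ∈ P₁.support := hw
        rcases (hP₁supp w).mp hw with rfl | rfl | rfl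
        · exact hxH
        · exact hyH
        · exact hzH
      · exact ((hP₂supp w).mp hw).1
    · intro hwH
      by_cases hwx : w = x
      · exact Or.inl ((hP₁supp w).mpr (Or.inl hwx))
      by_cases hwy : w = y
      · exact Or.inl ((hP₁supp w).mpr (Or.inr (Or.inl hwy)))
      by_cases hwz : w = z
      · exact Or.inl ((hP₁supp w).mpr (Or.inr (Or.inr hwz)))
      · exact Or.inr ((hP₂supp w).mpr ⟨hwH, hwx, hwy, hwz⟩)
  refine ⟨x, z, a₂, b₂, u, v, P₁, P₂, hP₁path, hP₂path, hdisj, hxa, hzb, huv,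
    ?_, ?_, ?_, ?_, ?_, ?_, ?_, ?_, ?_⟩
  · intro hu'; exact huH (by
      rcases (hP₁supp u).mp hu' with rfl | rfl | rfl <;> assumption)
  · intro hu'; exact huH ((hP₂supp u).mp hu').1
  · intro hv'; exact hvH (by
      rcases (hP₁supp v).mp hv' with rfl | rfl | rfl <;> assumption)
  · intro hv'; exact hvH ((hP₂supp v).mp hv').1
  · rw [hunion]; exact hH
  · -- u has 3 nbrs in P₁
    have : nbrsIn G u (supp P₁) = {x, y, z} := by
      ext w
      constructor
      · rintro ⟨hw, -⟩
        have hw : w ∈ P₁.support := hw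
        rcases (hP₁supp w).mp hw with rfl | rfl | rfl
        · exact Or.inl rfl
        · exact Or.inr (Or.inl rfl)
        · exact Or.inr (Or.inr rfl)
      · rintro (rfl | rfl | rfl)
        · exact ⟨(hP₁supp w).mpr (Or.inl rfl), hux⟩
        · exact ⟨(hP₁supp w).mpr (Or.inr (Or.inl rfl)), huy⟩
        · exact ⟨(hP₁supp w).mpr (Or.inr (Or.inr rfl)), huz⟩
    rw [this]
    have : ({x, y, z} : Set V).ncard = 3 := by
      rw [Set.ncard_eq_three]
      exact ⟨x, y, z, hyxne.symm, hxz, hyzne, rfl⟩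
    omega
  · intro w hw hadj
    have : w ∈ nbrsIn G u H := ⟨((hP₂supp w).mp hw).1, hadj⟩
    rw [hunbrs] at this
    obtain ⟨-, h1, h2, h3⟩ := (hP₂supp w).mp hw
    rcases this with rfl | rfl | rfl
    · exact h1 rfl
    · exact h2 rfl
    · exact h3 rfl
  · -- v has ≥ 3 nbrs in P₂
    have : nbrsIn G v (supp P₂) = nbrsIn G v H := by
      ext w
      constructor
      · rintro ⟨hw, hadj⟩
        exact ⟨((hP₂supp w).mp hw).1, hadj⟩
      · rintro ⟨hwH, hadj⟩
        refine ⟨(hP₂supp w).mpr ⟨hwH, ?_, ?_, ?_⟩, hadj⟩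
        · rintro rfl; exact hvx hadj
        · rintro rfl; exact hvy hadj
        · rintro rfl; exact hvz hadj
    rw [this]; exact hvcard
  · intro w hw hadj
    rcases (hP₁supp w).mp hw with rfl | rfl | rfl
    · exact hvx hadj
    · exact hvy hadj
    · exact hvz hadj

end Helpers

/-- In a (theta, pyramid, prism, turtle)-free graph, if `v` is major for a hole
`H`, `u` is a clone of `y` in `H`, `uv ∈ E(G)` and `yv ∉ E(G)`, then `u` and `v`
have a common neighbor in `H`. -/
theorem clone_major_common_neighbor {V : Type*} (G : SimpleGraph V)
    (hG : TPPTFree G) (H : Set V) (hH : IsHole G H) (u v y : V)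
    (hv : IsMajorFor G v H) (hu : IsCloneOf G u y H)
    (huv : G.Adj u v) (hyv : ¬ G.Adj y v) :
    ∃ w ∈ H, G.Adj u w ∧ G.Adj v w := by
  classical
  by_contra hcon
  push_neg at hcon
  obtain ⟨huH, x, z, hxH, hyH, hzH, hxy, hyz, hxz, hunbrs⟩ := hu
  obtain ⟨hvnH, hvne, hvnm⟩ := hv
  have hux : G.Adj u x := by
    have : x ∈ nbrsIn G u H := by rw [hunbrs]; simp
    exact this.2
  have huy : G.Adj u y := by
    have : y ∈ nbrsIn G u H := by rw [hunbrs]; simp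
    exact this.2
  have huz : G.Adj u z := by
    have : z ∈ nbrsIn G u H := by rw [hunbrs]; simp
    exact this.2
  have hvx : ¬ G.Adj v x := fun h => hcon x hxH hux h
  have hvy : ¬ G.Adj v y := fun h => hyv h.symm
  have hvz : ¬ G.Adj v z := fun h => hcon z hzH huz h
  have hfinN : (nbrsIn G v H).Finite := hH.1.subset (fun w hw => hw.1)
  have npos : 0 < (nbrsIn G v H).ncard := (Set.ncard_pos hfinN).mpr hvne
  by_cases h3 : 3 ≤ (nbrsIn G v H).ncard
  · -- turtle case
    obtain ⟨a₀, c₀, hcyc₀, hsupp₀⟩ := hole_cycle hH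
    have hyc₀ : y ∈ c₀.support := by
      rw [show (y ∈ c₀.support) = (y ∈ {w | w ∈ c₀.support}) from rfl, hsupp₀]
      exact hyH
    set c := c₀.rotate y hyc₀ with hcdef
    have hcyc : c.IsCycle := hcyc₀.rotate hyc₀
    have hsupp : ∀ z', z' ∈ c.support ↔ z' ∈ H := by
      intro z'
      rw [supp_rotate c₀ hcyc₀ hyc₀ z']
      rw [show (z' ∈ c₀.support) = (z' ∈ {w | w ∈ c₀.support}) from rfl, hsupp₀]
    obtain ⟨w₁, hyw₁, rest, hresteq⟩ := Walk.not_nil_iff.mp hcyc.not_nil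
    have hrestpath : rest.IsPath := by
      apply Walk.IsPath.mk'
      have := hcyc.2
      rw [hresteq, Walk.support_cons] at this
      exact this
    have hrestsupp : ∀ z', z' ∈ rest.support ↔ z' ∈ H := by
      intro z'
      constructor
      · intro hz
        rw [← hsupp, hresteq, Walk.support_cons]
        simp [hz]
      · intro hz
        have : z' ∈ c.support := (hsupp z').mpr hz
        rw [hresteq, Walk.support_cons, List.mem_cons] at this
        rcases this with rfl | h
        · exact rest.end_mem_support
        · exact h
    -- rest length ≥ 3
    have hrestlen : 3 ≤ rest.length := by
      have h1 : {w | w ∈ rest.support}.ncard = rest.length + 1 := by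
        have h2 : {w | w ∈ rest.support} = ↑rest.support.toFinset := by
          ext w; simp
        rw [h2, Set.ncard_coe_finset, List.toFinset_card_of_nodup hrestpath.support_nodup,
          Walk.length_support]
      have h4 : {w | w ∈ rest.support} = H := by
        ext w; exact hrestsupp w
      have := hH.2.1
      rw [h4] at h1
      omega
    obtain ⟨u₂, hyu₂, R₂, hR₂eq⟩ := Walk.not_nil_iff.mp
      (show ¬ rest.reverse.Nil by
        rw [Walk.nil_iff_length_eq, Walk.length_reverse]; omega)
    have hR₂path : R₂.IsPath := (hR₂eq ▸ hrestpath.reverse).of_cons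
    have hyR₂ : y ∉ R₂.support := by
      have := (hR₂eq ▸ hrestpath.reverse).support_nodup
      rw [Walk.support_cons] at this
      exact (List.nodup_cons.mp this).1
    have hR₂supp : supp R₂ = H \ {y} := by
      ext w
      constructor
      · intro hw
        have hw' : w ∈ R₂.support := hw
        have h5 : w ∈ rest.support := by
          rw [← List.mem_reverse, ← Walk.support_reverse, hR₂eq, Walk.support_cons]
          simp [hw']
        refine ⟨(hrestsupp w).mp h5, ?_⟩
        rintro rfl
        exact hyR₂ hw'
      · rintro ⟨hwH, hwy⟩
        have h5 : w ∈ rest.support := (hrestsupp w).mpr hwH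
        have h6 : w ∈ rest.reverse.support := by
          rw [Walk.support_reverse, List.mem_reverse]; exact h5
        rw [hR₂eq, Walk.support_cons, List.mem_cons] at h6
        rcases h6 with rfl | h6
        · exact absurd rfl hwy
        · exact h6
    have hR₂len : 2 ≤ R₂.length := by
      have : rest.reverse.length = R₂.length + 1 := by rw [hR₂eq, Walk.length_cons]
      rw [Walk.length_reverse] at this
      omega
    have hu₂w₁ : u₂ ≠ w₁ := by
      intro h
      subst h
      have := path_loop_nil hR₂path
      subst this
      simp at hR₂len
    have hynbrs : nbrsIn G y H = {x, z} :=
      eq_pair_of_ncard_two (hH.2.2.2 y hyH) ⟨hxH, hxy.symm⟩ ⟨hzH, hyz⟩ hxz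
    have hw₁H : w₁ ∈ H := (hrestsupp w₁).mp rest.start_mem_support
    have hu₂H : u₂ ∈ H := by
      have : u₂ ∈ rest.support := by
        rw [← List.mem_reverse, ← Walk.support_reverse, hR₂eq, Walk.support_cons]
        exact List.mem_cons_of_mem _ R₂.start_mem_support
      exact (hrestsupp u₂).mp this
    have hw₁mem : w₁ ∈ ({x, z} : Set V) := by rw [← hynbrs]; exact ⟨hw₁H, hyw₁⟩
    have hu₂mem : u₂ ∈ ({x, z} : Set V) := by rw [← hynbrs]; exact ⟨hu₂H, hyu₂⟩
    rcases hu₂mem with h₂ | h₂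
    · -- u₂ = x, so w₁ = z
      have hw₁z : w₁ = z := by
        rcases hw₁mem with h₁ | h₁
        · exact absurd (h₂.trans h₁.symm) hu₂w₁
        · exact h₁
      refine hG.2.2.2 (buildTurtle hH hxH hyH hzH hxy hyz hxz huH hunbrs hvnH huv
        hvx hvy hvz h3 (R₂.copy h₂ hw₁z) ?_ ?_)
      · rwa [Walk.isPath_copy]
      · rw [show supp (R₂.copy h₂ hw₁z) = supp R₂ from by
          ext w; simp [supp, Walk.support_copy]]
        exact hR₂supp
    · -- u₂ = z, so w₁ = x
      have hw₁x : w₁ = x := by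
        rcases hw₁mem with h₁ | h₁
        · exact h₁
        · exact absurd (h₂.trans h₁.symm) hu₂w₁
      have hunbrs' : nbrsIn G u H = {z, y, x} := by
        rw [hunbrs]; ext w; constructor
        · rintro (h | h | h)
          · exact Or.inr (Or.inr h)
          · exact Or.inr (Or.inl h)
          · exact Or.inl h
        · rintro (h | h | h)
          · exact Or.inr (Or.inr h)
          · exact Or.inr (Or.inl h)
          · exact Or.inl h
      refine hG.2.2.2 (buildTurtle hH hzH hyH hxH hyz.symm hxy.symm hxz.symm huH
        hunbrs' hvnH huv hvz hvy hvx h3 (R₂.copy (show u₂ = z from h₂) hw₁x) ?_ ?_)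
      · rwa [Walk.isPath_copy]
      · rw [show supp (R₂.copy (show u₂ = z from h₂) hw₁x) = supp R₂ from by
          ext w; simp [supp, Walk.support_copy]]
        have : (H \ {y}) = H \ {y} := rfl
        exact hR₂supp
  · -- few neighbors: v is minor or we get a theta
    push_neg at h3
    have hn12 : (nbrsIn G v H).ncard = 1 ∨ (nbrsIn G v H).ncard = 2 := by omega
    rcases hn12 with hn | hn
    · -- one neighbor: minor, contradiction
      obtain ⟨p, hp⟩ := Set.ncard_eq_one.mp hn
      have hpN : p ∈ nbrsIn G v H := by rw [hp]; rfl
      obtain ⟨a, c, hac, hpnbrs⟩ := Set.ncard_eq_two.mp (hH.2.2.2 p hpN.1)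
      have haN : a ∈ nbrsIn G p H := by rw [hpnbrs]; simp
      have hcN : c ∈ nbrsIn G p H := by rw [hpnbrs]; simp
      exact hvnm ⟨hvnH, hvne, a, p, c, haN.1, hpN.1, hcN.1, haN.2.symm, hcN.2, hac,
        by rw [hp]; rintro w rfl; exact Or.inr (Or.inl rfl)⟩
    · -- two neighbors
      obtain ⟨p, q, hpq, hpair⟩ := Set.ncard_eq_two.mp hn
      have hpN : p ∈ nbrsIn G v H := by rw [hpair]; simp
      have hqN : q ∈ nbrsIn G v H := by rw [hpair]; simp
      by_cases hadjpq : G.Adj p q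
      · -- adjacent: minor
        have hqpn : q ∈ nbrsIn G p H := ⟨hqN.1, hadjpq⟩
        obtain ⟨α, β, hαβ, hpnbrs⟩ := Set.ncard_eq_two.mp (hH.2.2.2 p hpN.1)
        have hqmem : q ∈ ({α, β} : Set V) := by rw [← hpnbrs]; exact hqpn
        obtain ⟨a, haq, han⟩ : ∃ a, a ≠ q ∧ a ∈ nbrsIn G p H := by
          rcases hqmem with h | h
          · refine ⟨β, ?_, by rw [hpnbrs]; simp⟩
            rw [h]; exact fun hh => hαβ hh.symm
          · refine ⟨α, ?_, by rw [hpnbrs]; simp⟩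
            rw [h]; exact hαβ
        exact hvnm ⟨hvnH, hvne, a, p, q, han.1, hpN.1, hqN.1, han.2.symm, hadjpq, haq,
          by rw [hpair]; rintro w (rfl | rfl)
             · exact Or.inr (Or.inl rfl)
             · exact Or.inr (Or.inr rfl)⟩
      · -- nonadjacent: theta
        exact hG.1 (theta_of_two_nbrs hH hvnH hpq hadjpq hpair)

end Paper
end

section
/- Let G be a finite simple graph containing no theta, pyramid, prism, or turtle as an induced subgraph, and let C be a proper separator of G. Then there are exactly two full components for C. -/
namespace Paper

open SimpleGraph

variable {V : Type*}

section Aux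
variable {G : SimpleGraph V}


private lemma getVert_takeUntil_length [DecidableEq V] {a b u : V} (p : G.Walk a b)
    (h : u ∈ p.support) : p.getVert (p.takeUntil u h).length = u := by
  have h2 := Walk.getVert_append (p.takeUntil u h) (p.dropUntil u h) (p.takeUntil u h).length
  rw [Walk.take_spec] at h2
  simpa using h2

private lemma edge_mem_of_min_aux [DecidableEq V] {a b : V} (p : G.Walk a b)
    (hmin : ∀ q : G.Walk a b, p.length ≤ q.length) {u v : V}
    (hu : u ∈ p.support) (hv : v ∈ p.support) (hadj : G.Adj u v)
    (hlt : (p.takeUntil u hu).length < (p.takeUntil v hv).length) :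
    s(u, v) ∈ p.edges := by
  set i := (p.takeUntil u hu).length with hi
  set j := (p.takeUntil v hv).length with hj
  have hjle : j ≤ p.length := p.length_takeUntil_le hv
  have hgu : p.getVert i = u := getVert_takeUntil_length p hu
  have hgv : p.getVert j = v := getVert_takeUntil_length p hv
  by_cases hsucc : j = i + 1
  · have hi_lt : i < p.length := by omega
    have hadj2 := p.toSubgraph_adj_getVert hi_lt
    have hgv' : p.getVert (i + 1) = v := by rw [← hsucc]; exact hgv
    rw [hgu, hgv'] at hadj2
    have h2 : s(u, v) ∈ p.toSubgraph.edgeSet := hadj2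
    rw [Walk.edgeSet_toSubgraph] at h2
    exact h2
  · exfalso
    have hdrop : j + (p.dropUntil v hv).length = p.length := by
      have h3 := congrArg Walk.length (p.take_spec hv)
      rwa [Walk.length_append] at h3
    have hq := hmin ((p.takeUntil u hu).append (Walk.cons hadj (p.dropUntil v hv)))
    rw [Walk.length_append, Walk.length_cons] at hq
    omega

private lemma edge_mem_of_min {a b : V} (p : G.Walk a b)
    (hmin : ∀ q : G.Walk a b, p.length ≤ q.length) {u v : V}
    (hu : u ∈ p.support) (hv : v ∈ p.support) (hadj : G.Adj u v) :
    s(u, v) ∈ p.edges := by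
  classical
  have hne : (p.takeUntil u hu).length ≠ (p.takeUntil v hv).length := by
    intro h
    apply hadj.ne
    rw [← getVert_takeUntil_length p hu, ← getVert_takeUntil_length p hv, h]
  rcases lt_or_gt_of_ne hne with h | h
  · exact edge_mem_of_min_aux p hmin hu hv hadj h
  · have h2 := edge_mem_of_min_aux p hmin hv hu hadj.symm h
    rwa [Sym2.eq_swap] at h2



private lemma start_edge_nbrs {a b : V} {p : G.Walk a b} (hp : p.IsPath) (hn : ¬ p.Nil) :
    {u | s(a, u) ∈ p.edges} = {p.getVert 1} := by
  cases p with
  | nil => simp at hn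
  | @cons _ c _ h q =>
    ext u
    simp only [Walk.edges_cons, List.mem_cons, Set.mem_setOf_eq, Set.mem_singleton_iff,
      Walk.getVert_cons_succ, Walk.getVert_zero]
    constructor
    · rintro (he | he)
      · rw [Sym2.eq_iff] at he
        rcases he with ⟨-, rfl⟩ | ⟨h1, -⟩
        · rfl
        · exact absurd h1 h.ne
      · exact absurd (Walk.fst_mem_support_of_mem_edges q he) ((Walk.cons_isPath_iff _ _).mp hp).2
    · rintro rfl
      exact Or.inl rfl

private lemma interior_edge_nbrs {a b : V} (p : G.Walk a b) :
    p.IsPath → ∀ v : V, v ∈ p.support → v ≠ a → v ≠ b →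
    ∃ x y : V, x ≠ y ∧ {u | s(v, u) ∈ p.edges} = {x, y} := by
  induction p with
  | nil =>
    intro _ v hv hva _
    simp only [Walk.support_nil, List.mem_singleton] at hv
    exact absurd hv hva
  | @cons a c b h q ih =>
    intro hp v hv hva hvb
    rw [Walk.support_cons, List.mem_cons] at hv
    rcases hv with rfl | hv
    · exact absurd rfl hva
    have hq : q.IsPath := ((Walk.cons_isPath_iff _ _).mp hp).1
    have hanotin : a ∉ q.support := ((Walk.cons_isPath_iff _ _).mp hp).2
    by_cases hvc : v = c
    · subst hvc
      have hqn : ¬ q.Nil := by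
        intro hn
        rw [Walk.nil_iff_length_eq] at hn
        have : q.getVert q.length = b := q.getVert_length
        rw [hn, Walk.getVert_zero] at this
        exact hvb this
      have hq1 : q.getVert 1 ∈ q.support :=
        Walk.mem_support_iff_exists_getVert.mpr ⟨1, rfl, by
          rw [Walk.nil_iff_length_eq] at hqn; omega⟩
      refine ⟨a, q.getVert 1, ?_, ?_⟩
      · intro hh
        rw [hh] at hanotin
        exact hanotin hq1
      · have hs := start_edge_nbrs hq hqn
        ext u
        simp only [Walk.edges_cons, List.mem_cons, Set.mem_setOf_eq, Set.mem_insert_iff,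
          Set.mem_singleton_iff]
        constructor
        · rintro (he | he)
          · rw [Sym2.eq_iff] at he
            rcases he with ⟨h1, -⟩ | ⟨-, rfl⟩
            · exact absurd h1.symm h.ne
            · exact Or.inl rfl
          · have hu : u ∈ {u | s(v, u) ∈ q.edges} := he
            rw [hs] at hu
            exact Or.inr hu
        · rintro (rfl | rfl)
          · exact Or.inl (Sym2.eq_swap)
          · refine Or.inr ?_
            have : q.getVert 1 ∈ {u | s(v, u) ∈ q.edges} := by rw [hs]; rfl
            exact this
    · obtain ⟨x, y, hxy, hset⟩ := ih hq v hv hvc hvb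
      refine ⟨x, y, hxy, ?_⟩
      rw [← hset]
      ext u
      simp only [Walk.edges_cons, List.mem_cons, Set.mem_setOf_eq]
      constructor
      · rintro (he | he)
        · rw [Sym2.eq_iff] at he
          rcases he with ⟨h1, -⟩ | ⟨h1, -⟩
          · exact absurd h1 hva
          · exact absurd h1 hvc
        · exact he
      · exact fun he => Or.inr he

private def restrict (G : SimpleGraph V) (S : Set V) : SimpleGraph V where
  Adj u v := G.Adj u v ∧ u ∈ S ∧ v ∈ S
  symm := ⟨fun u v h => ⟨h.1.symm, h.2.2, h.2.1⟩⟩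
  loopless := ⟨fun u h => G.loopless.irrefl u h.1⟩

private lemma restrict_le {S : Set V} : restrict G S ≤ G := fun _ _ h => h.1

private lemma support_subset_restrict {S : Set V} {a b : V} (p : (restrict G S).Walk a b)
    (ha : a ∈ S) : ∀ v ∈ p.support, v ∈ S := by
  induction p with
  | nil => intro v hv; rw [Walk.support_nil, List.mem_singleton] at hv; rwa [hv]
  | cons h q ih =>
    intro v hv
    rw [Walk.support_cons, List.mem_cons] at hv
    rcases hv with rfl | hv
    · exact ha
    · exact ih h.2.2 v hv

section Hole

variable {a b : V} {P Q : G.Walk a b}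

private lemma isHole_of_paths
    (hPp : P.IsPath) (hQp : Q.IsPath)
    (hne : a ≠ b) (hab : ¬ G.Adj a b)
    (hP2 : 2 ≤ P.length) (hQ2 : 2 ≤ Q.length)
    (hPc : ∀ u v : V, u ∈ P.support → v ∈ P.support → G.Adj u v → s(u, v) ∈ P.edges)
    (hQc : ∀ u v : V, u ∈ Q.support → v ∈ Q.support → G.Adj u v → s(u, v) ∈ Q.edges)
    (hint : ∀ v : V, v ∈ P.support → v ∈ Q.support → v = a ∨ v = b)
    (hcross : ∀ u v : V, u ∈ P.support → v ∈ Q.support →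
      u ≠ a → u ≠ b → v ≠ a → v ≠ b → ¬ G.Adj u v) :
    IsHole G (supp P ∪ supp Q) := by
  set H : Set V := supp P ∪ supp Q with hH
  have hPn : ¬ P.Nil := by rw [Walk.nil_iff_length_eq]; omega
  have hQn : ¬ Q.Nil := by rw [Walk.nil_iff_length_eq]; omega
  have hmemP : ∀ v : V, v ∈ P.support → v ∈ H := fun v hv => Or.inl hv
  have hmemQ : ∀ v : V, v ∈ Q.support → v ∈ H := fun v hv => Or.inr hv
  have hHmem : ∀ v : V, v ∈ H → v ∈ P.support ∨ v ∈ Q.support := fun v hv => hv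
  -- classification of edges inside H
  have hclass : ∀ u v : V, u ∈ H → v ∈ H → G.Adj u v →
      s(u, v) ∈ P.edges ∨ s(u, v) ∈ Q.edges := by
    intro u v hu hv hadj
    rcases hHmem u hu with huP | huQ <;> rcases hHmem v hv with hvP | hvQ
    · exact Or.inl (hPc u v huP hvP hadj)
    · by_cases huQ : u ∈ Q.support
      · exact Or.inr (hQc u v huQ hvQ hadj)
      · by_cases hvP : v ∈ P.support
        · exact Or.inl (hPc u v huP hvP hadj)
        · exfalso
          have hua : u ≠ a := fun h => huQ (h ▸ Q.start_mem_support)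
          have hub : u ≠ b := fun h => huQ (h ▸ Q.end_mem_support)
          have hva : v ≠ a := fun h => hvP (h ▸ P.start_mem_support)
          have hvb : v ≠ b := fun h => hvP (h ▸ P.end_mem_support)
          exact hcross u v huP hvQ hua hub hva hvb hadj
    · by_cases hvQ : v ∈ Q.support
      · exact Or.inr (hQc u v huQ hvQ hadj)
      · by_cases huP : u ∈ P.support
        · exact Or.inl (hPc u v huP hvP hadj)
        · exfalso
          have hva : v ≠ a := fun h => hvQ (h ▸ Q.start_mem_support)
          have hvb : v ≠ b := fun h => hvQ (h ▸ Q.end_mem_support)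
          have hua : u ≠ a := fun h => huP (h ▸ P.start_mem_support)
          have hub : u ≠ b := fun h => huP (h ▸ P.end_mem_support)
          exact hcross v u hvP huQ hva hvb hua hub hadj.symm
    · exact Or.inr (hQc u v huQ hvQ hadj)
  -- the neighbourhood of any vertex of H inside H
  have hnbr : ∀ v : V, v ∈ H →
      nbrsIn G v H = {u | s(v, u) ∈ P.edges} ∪ {u | s(v, u) ∈ Q.edges} := by
    intro v hv
    ext u
    constructor
    · rintro ⟨huH, hadj⟩
      exact hclass v u hv huH hadj
    · rintro (he | he)
      · exact ⟨hmemP u (Walk.snd_mem_support_of_mem_edges P he), P.adj_of_mem_edges he⟩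
      · exact ⟨hmemQ u (Walk.snd_mem_support_of_mem_edges Q he), Q.adj_of_mem_edges he⟩
  -- distinguished vertices
  have hp1s : P.getVert 1 ∈ P.support :=
    Walk.mem_support_iff_exists_getVert.mpr ⟨1, rfl, by omega⟩
  have hq1s : Q.getVert 1 ∈ Q.support :=
    Walk.mem_support_iff_exists_getVert.mpr ⟨1, rfl, by omega⟩
  have hap1 : G.Adj a (P.getVert 1) := by
    have := P.adj_getVert_succ (show 0 < P.length by omega)
    rwa [P.getVert_zero, zero_add] at this
  have haq1 : G.Adj a (Q.getVert 1) := by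
    have := Q.adj_getVert_succ (show 0 < Q.length by omega)
    rwa [Q.getVert_zero, zero_add] at this
  have hp1a : P.getVert 1 ≠ a := hap1.ne'
  have hp1b : P.getVert 1 ≠ b := fun h => hab (h ▸ hap1)
  have hq1a : Q.getVert 1 ≠ a := haq1.ne'
  have hq1b : Q.getVert 1 ≠ b := fun h => hab (h ▸ haq1)
  have hp1q1 : P.getVert 1 ≠ Q.getVert 1 := by
    intro h
    rcases hint (P.getVert 1) hp1s (h ▸ hq1s) with h' | h'
    · exact hp1a h'
    · exact hp1b h'
  -- finiteness
  have hfin : H.Finite := Set.Finite.union (P.support.finite_toSet) (Q.support.finite_toSet)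
  refine ⟨hfin, ?_, ?_, ?_⟩
  · -- 4 ≤ ncard
    have hsub : ({a, b, P.getVert 1, Q.getVert 1} : Set V) ⊆ H := by
      intro v hv
      rcases hv with rfl | rfl | rfl | rfl
      · exact hmemP v P.start_mem_support
      · exact hmemP v P.end_mem_support
      · exact hmemP _ hp1s
      · exact hmemQ _ hq1s
    have h4 : ({a, b, P.getVert 1, Q.getVert 1} : Set V).ncard = 4 := by
      rw [Set.ncard_insert_of_notMem (by simp [hne, hp1a.symm ∘ Eq.symm, hq1a.symm ∘ Eq.symm]
        <;> exact ⟨fun h => hp1a h.symm, fun h => hq1a h.symm⟩),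
        Set.ncard_insert_of_notMem (by
          simp only [Set.mem_insert_iff, Set.mem_singleton_iff, not_or]
          exact ⟨fun h => hp1b h.symm, fun h => hq1b h.symm⟩),
        Set.ncard_pair hp1q1]
    calc (4 : ℕ) = ({a, b, P.getVert 1, Q.getVert 1} : Set V).ncard := h4.symm
      _ ≤ H.ncard := Set.ncard_le_ncard hsub hfin
  · -- connected
    have hK := (P.append Q.reverse).connected_induce_support
    have hset : {v | v ∈ (P.append Q.reverse).support} = H := by
      ext v
      simp only [Set.mem_setOf_eq, Walk.mem_support_append_iff, Walk.support_reverse,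
        List.mem_reverse, hH, supp, Set.mem_union, Set.mem_setOf_eq]
    rwa [hset] at hK
  · -- degrees
    intro v hv
    rw [hnbr v hv]
    by_cases hva : v = a
    · subst hva
      rw [start_edge_nbrs hPp hPn, start_edge_nbrs hQp hQn, Set.singleton_union]
      exact Set.ncard_pair hp1q1
    by_cases hvb : v = b
    · subst hvb
      have hPr : {u | s(v, u) ∈ P.edges} = {P.reverse.getVert 1} := by
        have h1 := start_edge_nbrs hPp.reverse (by
          rw [Walk.nil_iff_length_eq, Walk.length_reverse]; omega)
        rw [← h1]
        ext u
        simp [Walk.edges_reverse]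
      have hQr : {u | s(v, u) ∈ Q.edges} = {Q.reverse.getVert 1} := by
        have h1 := start_edge_nbrs hQp.reverse (by
          rw [Walk.nil_iff_length_eq, Walk.length_reverse]; omega)
        rw [← h1]
        ext u
        simp [Walk.edges_reverse]
      have hprs : P.reverse.getVert 1 ∈ P.support := by
        have : P.reverse.getVert 1 ∈ P.reverse.support :=
          Walk.mem_support_iff_exists_getVert.mpr ⟨1, rfl, by rw [Walk.length_reverse]; omega⟩
        rwa [Walk.support_reverse, List.mem_reverse] at this
      have hqrs : Q.reverse.getVert 1 ∈ Q.support := by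
        have : Q.reverse.getVert 1 ∈ Q.reverse.support :=
          Walk.mem_support_iff_exists_getVert.mpr ⟨1, rfl, by rw [Walk.length_reverse]; omega⟩
        rwa [Walk.support_reverse, List.mem_reverse] at this
      have hbpr : G.Adj v (P.reverse.getVert 1) := by
        have := P.reverse.adj_getVert_succ (show 0 < P.reverse.length by
          rw [Walk.length_reverse]; omega)
        rwa [Walk.getVert_zero, zero_add] at this
      have hbqr : G.Adj v (Q.reverse.getVert 1) := by
        have := Q.reverse.adj_getVert_succ (show 0 < Q.reverse.length by
          rw [Walk.length_reverse]; omega)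
        rwa [Walk.getVert_zero, zero_add] at this
      have hpra : P.reverse.getVert 1 ≠ a := fun h => hab (h ▸ hbpr).symm
      have hprb : P.reverse.getVert 1 ≠ v := hbpr.ne'
      have hpq : P.reverse.getVert 1 ≠ Q.reverse.getVert 1 := by
        intro h
        rcases hint _ hprs (h ▸ hqrs) with h' | h'
        · exact hpra h'
        · exact hprb h'
      rw [hPr, hQr, Set.singleton_union]
      exact Set.ncard_pair hpq
    rcases hHmem v hv with hvP | hvQ
    · have hvQ : v ∉ Q.support := by
        intro h
        rcases hint v hvP h with h' | h'
        · exact hva h'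
        · exact hvb h'
      have hQempty : {u | s(v, u) ∈ Q.edges} = ∅ := by
        ext u
        simp only [Set.mem_setOf_eq, Set.mem_empty_iff_false, iff_false]
        exact fun he => hvQ (Walk.fst_mem_support_of_mem_edges Q he)
      obtain ⟨x, y, hxy, hset⟩ := interior_edge_nbrs P hPp v hvP hva hvb
      rw [hQempty, Set.union_empty, hset]
      exact Set.ncard_pair hxy
    · have hvP : v ∉ P.support := by
        intro h
        rcases hint v h hvQ with h' | h'
        · exact hva h'
        · exact hvb h'
      have hPempty : {u | s(v, u) ∈ P.edges} = ∅ := by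
        ext u
        simp only [Set.mem_setOf_eq, Set.mem_empty_iff_false, iff_false]
        exact fun he => hvP (Walk.fst_mem_support_of_mem_edges P he)
      obtain ⟨x, y, hxy, hset⟩ := interior_edge_nbrs Q hQp v hvQ hva hvb
      rw [hPempty, Set.empty_union, hset]
      exact Set.ncard_pair hxy

end Hole

private lemma comp_cross {C A B : Set V} (hA : IsCompOf G C A) (hB : IsCompOf G C B)
    (hAB : Disjoint A B) {u v : V} (hu : u ∈ A) (hv : v ∈ B) : ¬ G.Adj u v := by
  intro h
  have hvC : v ∉ C := fun hc => (Set.disjoint_left.mp hB.2.1 hv) hc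
  have hvA : v ∈ A := hA.2.2.2 u hu v h hvC
  exact (Set.disjoint_left.mp hAB hvA) hv

private lemma mem_comp_of_walk {C A B : Set V} (hAC : Disjoint A C) (hB : IsCompOf G C B)
    {x y : ↥A} (w : (G.induce A).Walk x y) (hx : (x : V) ∈ B) : (y : V) ∈ B := by
  induction w with
  | nil => exact hx
  | @cons x z y h q ih =>
    apply ih
    refine hB.2.2.2 _ hx _ h ?_
    exact fun hc => (Set.disjoint_left.mp hAC z.2) hc

private lemma compOf_subset {C A B : Set V} (hA : IsCompOf G C A) (hB : IsCompOf G C B)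
    (hne : (A ∩ B).Nonempty) : A ⊆ B := by
  obtain ⟨x0, hx0A, hx0B⟩ := hne
  intro v hv
  obtain ⟨w⟩ := hA.2.2.1.preconnected ⟨x0, hx0A⟩ ⟨v, hv⟩
  exact mem_comp_of_walk hA.2.1 hB w hx0B

private lemma compOf_eq {C A B : Set V} (hA : IsCompOf G C A) (hB : IsCompOf G C B)
    (hne : (A ∩ B).Nonempty) : A = B :=
  Set.Subset.antisymm (compOf_subset hA hB hne)
    (compOf_subset hB hA (by rwa [Set.inter_comm] at hne))

private lemma exists_good_path {C D : Set V} (hD : IsCompOf G C D) (hND : setNbrs G D = C)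
    {a b : V} (ha : a ∈ C) (hb : b ∈ C) (hne : a ≠ b) (hab : ¬ G.Adj a b) :
    ∃ P : G.Walk a b, P.IsPath ∧ 2 ≤ P.length ∧
      (∀ v ∈ P.support, v = a ∨ v = b ∨ v ∈ D) ∧
      (∀ u v : V, u ∈ P.support → v ∈ P.support → G.Adj u v → s(u, v) ∈ P.edges) := by
  classical
  set S : Set V := D ∪ {a, b} with hS
  have haS : a ∈ S := Or.inr (Or.inl rfl)
  have hbS : b ∈ S := Or.inr (Or.inr rfl)
  have hDS : ∀ x ∈ D, x ∈ S := fun x hx => Or.inl hx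
  rw [← hND] at ha hb
  obtain ⟨x, hxD, hxa⟩ := ha.2
  obtain ⟨y, hyD, hyb⟩ := hb.2
  have hreach : (restrict G S).Reachable a b := by
    have hxy : (restrict G S).Reachable x y := by
      obtain ⟨w⟩ := hD.2.2.1.preconnected ⟨x, hxD⟩ ⟨y, hyD⟩
      exact ⟨w.map (⟨Subtype.val, fun {p q} hpq =>
        (⟨hpq, hDS _ p.2, hDS _ q.2⟩ : (restrict G S).Adj ↑p ↑q)⟩ :
        G.induce D →g restrict G S)⟩
    have h1 : (restrict G S).Adj a x := ⟨hxa.symm, haS, hDS _ hxD⟩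
    have h2 : (restrict G S).Adj y b := ⟨hyb, hDS _ hyD, hbS⟩
    exact (h1.reachable.trans hxy).trans h2.reachable
  obtain ⟨P', hP'path, hP'len⟩ := hreach.exists_path_of_dist
  have hmin : ∀ q : (restrict G S).Walk a b, P'.length ≤ q.length := by
    intro q; rw [hP'len]; exact dist_le q
  have hsupS : ∀ v ∈ P'.support, v ∈ S := support_subset_restrict P' haS
  have hedges : ∀ e ∈ P'.edges, e ∈ G.edgeSet := fun e he =>
    (edgeSet_mono restrict_le) (P'.edges_subset_edgeSet he)
  have hlen2 : 2 ≤ P'.length := by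
    have h0 : P'.length ≠ 0 := by
      intro h
      have hb' := P'.getVert_length
      rw [h, Walk.getVert_zero] at hb'
      exact hne hb'
    have h1 : P'.length ≠ 1 := by
      intro h
      have hadj := P'.adj_getVert_succ (show 0 < P'.length by omega)
      rw [P'.getVert_zero, zero_add, show (1 : ℕ) = P'.length from h.symm,
        P'.getVert_length] at hadj
      exact hab hadj.1
    omega
  refine ⟨P'.transfer G hedges, ?_, ?_, ?_, ?_⟩
  · rw [Walk.isPath_def, Walk.support_transfer]
    exact hP'path.support_nodup
  · rwa [Walk.length_transfer]
  · intro v hv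
    rw [Walk.support_transfer] at hv
    rcases hsupS v hv with h | h | h
    · exact Or.inr (Or.inr h)
    · exact Or.inl h
    · exact Or.inr (Or.inl h)
  · intro u v hu hv hadj
    rw [Walk.support_transfer] at hu hv
    rw [Walk.edges_transfer]
    exact edge_mem_of_min P' hmin hu hv ⟨hadj, hsupS u hu, hsupS v hv⟩

end Aux

/-- In a (theta, pyramid, prism, turtle)-free graph, every proper separator has
exactly two full components. -/
theorem two_full_components {V : Type*} (G : SimpleGraph V) (hG : TPPTFree G)
    (C : Set V) (hC : IsProperSep G C) :
    ∃ L R : Set V, L ≠ R ∧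
      (IsCompOf G C L ∧ setNbrs G L = C) ∧
      (IsCompOf G C R ∧ setNbrs G R = C) ∧
      ∀ D : Set V, IsCompOf G C D → setNbrs G D = C → D = L ∨ D = R := by
  obtain ⟨⟨L, R, hL, hR, hLR, hNL, hNR⟩, hnc⟩ := hC
  refine ⟨L, R, hLR, ⟨hL, hNL⟩, ⟨hR, hNR⟩, ?_⟩
  intro D hD hND
  by_contra hcon
  push_neg at hcon
  obtain ⟨hDL, hDR⟩ := hcon
  push_neg at hnc
  obtain ⟨a, ha, b, hb, hneq, hab⟩ := hnc
  have hdisj : ∀ A B : Set V, IsCompOf G C A → IsCompOf G C B → A ≠ B → Disjoint A B := by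
    intro A B hA hB hne
    by_contra h
    rw [Set.not_disjoint_iff_nonempty_inter] at h
    exact hne (compOf_eq hA hB h)
  have dLR : Disjoint L R := hdisj L R hL hR hLR
  have dDL : Disjoint D L := hdisj D L hD hL hDL
  have dDR : Disjoint D R := hdisj D R hD hR hDR
  obtain ⟨P₁, h₁p, h₁l, h₁s, h₁c⟩ := exists_good_path hD hND ha hb hneq hab
  obtain ⟨P₂, h₂p, h₂l, h₂s, h₂c⟩ := exists_good_path hL hNL ha hb hneq hab
  obtain ⟨P₃, h₃p, h₃l, h₃s, h₃c⟩ := exists_good_path hR hNR ha hb hneq hab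
  have hint : ∀ (A B : Set V), Disjoint A B → ∀ (p q : G.Walk a b),
      (∀ v ∈ p.support, v = a ∨ v = b ∨ v ∈ A) → (∀ v ∈ q.support, v = a ∨ v = b ∨ v ∈ B) →
      ∀ v : V, v ∈ p.support → v ∈ q.support → v = a ∨ v = b := by
    intro A B hAB p q hp hq v hv1 hv2
    rcases hp v hv1 with h | h | h
    · exact Or.inl h
    · exact Or.inr h
    rcases hq v hv2 with h' | h' | h'
    · exact Or.inl h'
    · exact Or.inr h'
    · exact absurd h' (Set.disjoint_left.mp hAB h)
  have hcross : ∀ (A B : Set V), IsCompOf G C A → IsCompOf G C B → Disjoint A B →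
      ∀ (p q : G.Walk a b),
      (∀ v ∈ p.support, v = a ∨ v = b ∨ v ∈ A) → (∀ v ∈ q.support, v = a ∨ v = b ∨ v ∈ B) →
      ∀ u v : V, u ∈ p.support → v ∈ q.support →
        u ≠ a → u ≠ b → v ≠ a → v ≠ b → ¬ G.Adj u v := by
    intro A B hA hB hAB p q hp hq u v hu hv hua hub hva hvb
    have huA : u ∈ A := by
      rcases hp u hu with h | h | h
      exacts [absurd h hua, absurd h hub, h]
    have hvB : v ∈ B := by
      rcases hq v hv with h | h | h
      exacts [absurd h hva, absurd h hvb, h]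
    exact comp_cross hA hB hAB huA hvB
  exact hG.1 ⟨a, b, P₁, P₂, P₃, hneq, hab, h₁p, h₂p, h₃p, h₁l, h₂l, h₃l,
    hint D L dDL P₁ P₂ h₁s h₂s, hint D R dDR P₁ P₃ h₁s h₃s, hint L R dLR P₂ P₃ h₂s h₃s,
    isHole_of_paths h₁p h₂p hneq hab h₁l h₂l h₁c h₂c (hint D L dDL P₁ P₂ h₁s h₂s)
      (hcross D L hD hL dDL P₁ P₂ h₁s h₂s),
    isHole_of_paths h₁p h₃p hneq hab h₁l h₃l h₁c h₃c (hint D R dDR P₁ P₃ h₁s h₃s)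
      (hcross D R hD hR dDR P₁ P₃ h₁s h₃s),
    isHole_of_paths h₂p h₃p hneq hab h₂l h₃l h₂c h₃c (hint L R dLR P₂ P₃ h₂s h₃s)
      (hcross L R hL hR dLR P₂ P₃ h₂s h₃s)⟩

end Paper
end
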